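/- arXiv:1807.02306 — 5 statements merged into one kernel-verified Lean document; each statement's English description precedes it below -/
import Mathlib

section
/- Let 𝐓 = [0,T], 𝐗 = [L,R], 𝐘 = [y̲,ȳ] be compact intervals, let f : ℝ → ℝ be continuous, let ν be a finite Borel measure on 𝐊 = 𝐓×𝐗×𝐘, and let λ_𝐘 denote the normalized Lebesgue measure on 𝐘. Let ϑ⁺ and ϑ⁻ be Borel measures on 𝐊×𝐘 with supp ϑ⁺ ⊆ {(t,x,λ,v) : λ ≥ v}, supp ϑ⁻ ⊆ {(t,x,λ,v) : λ ≤ v}, and ϑ⁺ + ϑ⁻ = ν ⊗ λ_𝐘. Suppose that for every nonnegative θ ∈ C(𝐘) and every nonnegative ψ ∈ C¹(𝐓×𝐗): ∫ θ(v)(∂_tψ(t,x)(λ−v) + ∂_xψ(t,x)(f(λ)−f(v))) dϑ⁺ + ∫ θ(v)(∂_tψ(t,x)(v−λ) + ∂_xψ(t,x)(f(v)−f(λ))) dϑ⁻ ≥ 0. Then for every nonnegative ψ ∈ C¹(𝐓×𝐗) and every v ∈ 𝐘: ∫_𝐊 (∂_tψ(t,x)|λ−v| + ∂_xψ(t,x)·sign(λ−v)(f(λ)−f(v)))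 dν(t,x,λ) ≥ 0, i.e. the Kruzkhov entropy inequalities for all parameters v are recovered. -/
open MeasureTheory Set
open scoped ENNReal

noncomputable section

/-- The entropy expression tested against `θ(v)` and `ψ(t,x)`; the integration
variables on `𝐊 × 𝐘` are `q = ((t, x, λ), v)`. -/
def entropyExpr (f : ℝ → ℝ) (ϑp ϑm : Measure ((ℝ × ℝ × ℝ) × ℝ))
    (ψ : ℝ × ℝ → ℝ) (θ : ℝ → ℝ) : ℝ :=
  (∫ q : (ℝ × ℝ × ℝ) × ℝ,
      θ q.2 * ((deriv (fun s => ψ (s, q.1.2.1)) q.1.1) * (q.1.2.2 - q.2)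
        + (deriv (fun z => ψ (q.1.1, z)) q.1.2.1) * (f q.1.2.2 - f q.2)) ∂ϑp)
    + (∫ q : (ℝ × ℝ × ℝ) × ℝ,
      θ q.2 * ((deriv (fun s => ψ (s, q.1.2.1)) q.1.1) * (q.2 - q.1.2.2)
        + (deriv (fun z => ψ (q.1.1, z)) q.1.2.1) * (f q.2 - f q.1.2.2)) ∂ϑm)

lemma integrable_of_compact_null {α : Type*} [MeasurableSpace α] [TopologicalSpace α]
    [OpensMeasurableSpace α] (μ : Measure α) [IsFiniteMeasure μ] {g : α → ℝ}
    (hg : Continuous g) {K : Set α} (hK : IsCompact K) (h0 : μ Kᶜ = 0) :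
    Integrable g μ := by
  obtain ⟨C, hC⟩ := hK.exists_bound_of_continuousOn hg.continuousOn
  refine Integrable.mono' (integrable_const (max C 0)) hg.aestronglyMeasurable ?_
  have hae : ∀ᵐ x ∂μ, x ∈ K := by
    rw [ae_iff]; exact h0
  filter_upwards [hae] with x hx
  exact le_trans (hC x hx) (le_max_left _ _)

lemma sign_mul_eq (f : ℝ → ℝ) (a b : ℝ) :
    Real.sign (a - b) * (f a - f b) = f (max a b) - f (min a b) := by
  rcases lt_trichotomy a b with h | h | h
  · rw [Real.sign_of_neg (by linarith), max_eq_right h.le, min_eq_left h.le]; ring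
  · subst h; simp
  · rw [Real.sign_of_pos (by linarith), max_eq_left h.le, min_eq_right h.le]; ring

lemma deriv_fst_eq {ψ : ℝ × ℝ → ℝ} (hψ : ContDiff ℝ 1 ψ) (t x : ℝ) :
    deriv (fun s => ψ (s, x)) t = fderiv ℝ ψ (t, x) (1, 0) := by
  have h1 : HasDerivAt (fun s => (s, x)) ((1 : ℝ), (0 : ℝ)) t :=
    HasDerivAt.prodMk (hasDerivAt_id t) (hasDerivAt_const t x)
  have h2 := (hψ.differentiable one_ne_zero (t, x)).hasFDerivAt
  exact (h2.comp_hasDerivAt t h1).deriv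

lemma deriv_snd_eq {ψ : ℝ × ℝ → ℝ} (hψ : ContDiff ℝ 1 ψ) (t x : ℝ) :
    deriv (fun z => ψ (t, z)) x = fderiv ℝ ψ (t, x) (0, 1) := by
  have h1 : HasDerivAt (fun z => (t, z)) ((0 : ℝ), (1 : ℝ)) x :=
    HasDerivAt.prodMk (hasDerivAt_const x t) (hasDerivAt_id x)
  have h2 := (hψ.differentiable one_ne_zero (t, x)).hasFDerivAt
  exact (h2.comp_hasDerivAt x h1).deriv

/-- The Kruzkhov entropy integrand, with parameter `w`. -/
def Gfun (f : ℝ → ℝ) (ψ : ℝ × ℝ → ℝ) (w : ℝ) (p : ℝ × ℝ × ℝ) : ℝ :=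
  fderiv ℝ ψ (p.1, p.2.1) (1, 0) * |p.2.2 - w|
    + fderiv ℝ ψ (p.1, p.2.1) (0, 1) * (f (max p.2.2 w) - f (min p.2.2 w))

lemma Gfun_continuous {f : ℝ → ℝ} (hf : Continuous f) {ψ : ℝ × ℝ → ℝ}
    (hψ : ContDiff ℝ 1 ψ) :
    Continuous (fun q : (ℝ × ℝ × ℝ) × ℝ => Gfun f ψ q.2 q.1) := by
  have hfd : Continuous (fderiv ℝ ψ) := hψ.continuous_fderiv one_ne_zero
  have hpair : Continuous fun q : (ℝ × ℝ × ℝ) × ℝ => (q.1.1, q.1.2.1) :=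
    ((continuous_fst.comp continuous_fst).prodMk
      (continuous_fst.comp (continuous_snd.comp continuous_fst)))
  have hc1 : Continuous fun q : (ℝ × ℝ × ℝ) × ℝ =>
      fderiv ℝ ψ (q.1.1, q.1.2.1) ((1 : ℝ), (0 : ℝ)) :=
    (hfd.comp hpair).clm_apply continuous_const
  have hc2 : Continuous fun q : (ℝ × ℝ × ℝ) × ℝ =>
      fderiv ℝ ψ (q.1.1, q.1.2.1) ((0 : ℝ), (1 : ℝ)) :=
    (hfd.comp hpair).clm_apply continuous_const
  have hlam : Continuous fun q : (ℝ × ℝ × ℝ) × ℝ => q.1.2.2 :=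
    continuous_snd.comp (continuous_snd.comp continuous_fst)
  exact (hc1.mul (hlam.sub continuous_snd).abs).add
    (hc2.mul ((hf.comp (hlam.max continuous_snd)).sub (hf.comp (hlam.min continuous_snd))))

/-- Recovering all Kruzkhov entropy inequalities from the split measures
`ϑ⁺, ϑ⁻` with `ϑ⁺ + ϑ⁻ = ν ⊗ λ_𝐘` (Lemma 2 of the paper). -/
theorem kruzkhov_entropies_recovered
    (T L R ylo yhi : ℝ) (hT : 0 < T) (hLR : L < R) (hY : ylo < yhi)
    (f : ℝ → ℝ) (hf : Continuous f)
    (ν : Measure (ℝ × ℝ × ℝ)) [IsFiniteMeasure ν]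
    (hν : ν ((Icc 0 T ×ˢ (Icc L R ×ˢ Icc ylo yhi))ᶜ) = 0)
    (ϑp ϑm : Measure ((ℝ × ℝ × ℝ) × ℝ))
    (hϑp : ϑp {q : (ℝ × ℝ × ℝ) × ℝ | q.1.2.2 < q.2} = 0)
    (hϑm : ϑm {q : (ℝ × ℝ × ℝ) × ℝ | q.2 < q.1.2.2} = 0)
    (hsum : ϑp + ϑm
      = ν.prod ((ENNReal.ofReal (yhi - ylo))⁻¹ • volume.restrict (Icc ylo yhi)))
    (H : ∀ θ : ℝ → ℝ, Continuous θ → (∀ v ∈ Icc ylo yhi, 0 ≤ θ v) →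
      ∀ ψ : ℝ × ℝ → ℝ, ContDiff ℝ 1 ψ →
        (∀ t ∈ Icc 0 T, ∀ x ∈ Icc L R, 0 ≤ ψ (t, x)) →
        0 ≤ entropyExpr f ϑp ϑm ψ θ) :
    ∀ ψ : ℝ × ℝ → ℝ, ContDiff ℝ 1 ψ →
      (∀ t ∈ Icc 0 T, ∀ x ∈ Icc L R, 0 ≤ ψ (t, x)) →
      ∀ v ∈ Icc ylo yhi,
        0 ≤ ∫ p : ℝ × ℝ × ℝ,
          ((deriv (fun s => ψ (s, p.2.1)) p.1) * |p.2.2 - v|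
            + (deriv (fun z => ψ (p.1, z)) p.2.1)
              * (Real.sign (p.2.2 - v) * (f p.2.2 - f v))) ∂ν := by
  intro ψ hψ hψ0 v hv
  set c : ℝ≥0∞ := (ENNReal.ofReal (yhi - ylo))⁻¹ with hcdef
  set μY : Measure ℝ := c • volume.restrict (Icc ylo yhi) with hμYdef
  have hμYfin : IsFiniteMeasure μY := by
    constructor
    have h1 : c < ⊤ := by
      rw [hcdef]; exact ENNReal.inv_lt_top.2 (ENNReal.ofReal_pos.2 (by linarith))
    simp only [hμYdef, Measure.smul_apply, smul_eq_mul,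
      Measure.restrict_apply MeasurableSet.univ, univ_inter, Real.volume_Icc]
    exact ENNReal.mul_lt_top h1 ENNReal.ofReal_lt_top
  haveI := hμYfin
  set K : Set (ℝ × ℝ × ℝ) := Icc 0 T ×ˢ (Icc L R ×ˢ Icc ylo yhi) with hKdef
  have hKcompact : IsCompact K :=
    (isCompact_Icc.prod (isCompact_Icc.prod isCompact_Icc))
  have haeK : ∀ᵐ p ∂ν, p ∈ K := by rw [ae_iff]; exact hν
  have hμYc : μY (Icc ylo yhi)ᶜ = 0 := by
    rw [hμYdef]
    simp only [Measure.smul_apply, smul_eq_mul,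
      Measure.restrict_apply measurableSet_Icc.compl, compl_inter_self, measure_empty,
      mul_zero]
  have hGc := Gfun_continuous hf hψ
  -- Step 1: the inequality for the iterated integral
  have key : ∀ θ : ℝ → ℝ, Continuous θ → (∀ w, 0 ≤ θ w) →
      0 ≤ ∫ w, θ w * (∫ p, Gfun f ψ w p ∂ν) ∂μY := by
    intro θ hθc hθ0
    have h0 := H θ hθc (fun w _ => hθ0 w) ψ hψ hψ0
    rw [entropyExpr] at h0
    simp only [deriv_fst_eq hψ, deriv_snd_eq hψ] at h0
    set F : ((ℝ × ℝ × ℝ) × ℝ) → ℝ := fun q => θ q.2 * Gfun f ψ q.2 q.1 with hFdef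
    have hFc : Continuous F := (hθc.comp continuous_snd).mul hGc
    have hKY : (ν.prod μY) ((K ×ˢ Icc ylo yhi)ᶜ) = 0 := by
      rw [compl_prod_eq_union]
      refine measure_union_null ?_ ?_
      · rw [Measure.prod_prod, hν, zero_mul]
      · rw [Measure.prod_prod, hμYc, mul_zero]
    have hFint : Integrable F (ν.prod μY) :=
      integrable_of_compact_null _ hFc (hKcompact.prod isCompact_Icc) hKY
    have hFint' : Integrable F (ϑp + ϑm) := by rw [hsum]; exact hFint
    have hintp : Integrable F ϑp := hFint'.mono_measure (Measure.le_add_right le_rfl)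
    have hintm : Integrable F ϑm := hFint'.mono_measure (Measure.le_add_left le_rfl)
    have hps : ∀ᵐ q ∂ϑp, q.2 ≤ q.1.2.2 := by
      rw [ae_iff]; simpa [not_le] using hϑp
    have hms : ∀ᵐ q ∂ϑm, q.1.2.2 ≤ q.2 := by
      rw [ae_iff]; simpa [not_le] using hϑm
    have hp : (∫ q : (ℝ × ℝ × ℝ) × ℝ,
        θ q.2 * ((fderiv ℝ ψ (q.1.1, q.1.2.1) (1, 0)) * (q.1.2.2 - q.2)
          + (fderiv ℝ ψ (q.1.1, q.1.2.1) (0, 1)) * (f q.1.2.2 - f q.2)) ∂ϑp)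
        = ∫ q, F q ∂ϑp := by
      refine integral_congr_ae (hps.mono fun q hq => ?_)
      simp only [hFdef, Gfun]
      rw [abs_of_nonneg (sub_nonneg.2 hq), max_eq_left hq, min_eq_right hq]
    have hm : (∫ q : (ℝ × ℝ × ℝ) × ℝ,
        θ q.2 * ((fderiv ℝ ψ (q.1.1, q.1.2.1) (1, 0)) * (q.2 - q.1.2.2)
          + (fderiv ℝ ψ (q.1.1, q.1.2.1) (0, 1)) * (f q.2 - f q.1.2.2)) ∂ϑm)
        = ∫ q, F q ∂ϑm := by
      refine integral_congr_ae (hms.mono fun q hq => ?_)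
      simp only [hFdef, Gfun]
      rw [abs_of_nonpos (sub_nonpos.2 hq), max_eq_right hq, min_eq_left hq]
      ring
    rw [hp, hm, ← integral_add_measure hintp hintm, hsum] at h0
    rw [integral_prod_symm F hFint] at h0
    simpa only [hFdef, integral_const_mul] using h0
  -- Step 2: clamp the parameter and get a continuous function of w
  set clamp : ℝ → ℝ := fun w => max ylo (min w yhi) with hclampdef
  have hclampmem : ∀ w, clamp w ∈ Icc ylo yhi := fun w =>
    ⟨le_max_left _ _, max_le hY.le (min_le_right _ _)⟩
  have hclampid : ∀ w ∈ Icc ylo yhi, clamp w = w := fun w hw => by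
    rw [hclampdef]; simp only [min_eq_left hw.2, max_eq_right hw.1]
  set gc : ℝ → ℝ := fun w => ∫ p, Gfun f ψ (clamp w) p ∂ν with hgcdef
  have key2 : ∀ θ : ℝ → ℝ, Continuous θ → (∀ w, 0 ≤ θ w) →
      0 ≤ ∫ w, θ w * gc w ∂μY := by
    intro θ hθc hθ0
    refine le_of_le_of_eq (key θ hθc hθ0) (integral_congr_ae ?_)
    have hmem : ∀ᵐ w ∂μY, w ∈ Icc ylo yhi := by
      rw [hμYdef]
      exact Measure.ae_smul_measure (ae_restrict_mem measurableSet_Icc) c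
    filter_upwards [hmem] with w hw
    rw [hgcdef]
    simp only [hclampid w hw]
  -- continuity of gc
  have hgccont : Continuous gc := by
    obtain ⟨C, hC⟩ := (hKcompact.prod (isCompact_Icc (a := ylo) (b := yhi))).exists_bound_of_continuousOn hGc.continuousOn
    have hclampc : Continuous clamp := continuous_const.max (continuous_id.min continuous_const)
    rw [hgcdef]
    refine continuous_of_dominated (bound := fun _ => max C 0) ?_ ?_ (integrable_const _) ?_
    · intro w
      exact (hGc.comp (continuous_id.prodMk continuous_const)).aestronglyMeasurable
    · intro w
      filter_upwards [haeK] with p hp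
      exact le_trans (hC (p, clamp w) ⟨hp, hclampmem w⟩) (le_max_left _ _)
    · refine ae_of_all _ fun p => ?_
      exact (hGc.comp (continuous_const.prodMk continuous_id)).comp hclampc
  -- Step 3: pointwise nonnegativity on Icc
  have hpos : ∀ u ∈ Icc ylo yhi, 0 ≤ gc u := by
    intro u hu
    by_contra hneg
    push_neg at hneg
    obtain ⟨δ, hδ, hball⟩ := Metric.continuousAt_iff.mp hgccont.continuousAt
      (ε := -gc u / 2) (by linarith)
    have hclose : ∀ w, |w - u| < δ → gc w < gc u / 2 := by
      intro w hw
      have := hball (by rwa [Real.dist_eq])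
      rw [Real.dist_eq, abs_lt] at this
      linarith [this.2]
    set θ : ℝ → ℝ := fun w => max (δ - |w - u|) 0 with hθdef
    have hθc : Continuous θ :=
      (continuous_const.sub (continuous_id.sub continuous_const).abs).max continuous_const
    have hθ0 : ∀ w, 0 ≤ θ w := fun w => le_max_right _ _
    have hI := key2 θ hθc hθ0
    rw [hμYdef, integral_smul_measure, smul_eq_mul] at hI
    have hcpos : 0 < c.toReal := by
      rw [hcdef, ENNReal.toReal_inv, ENNReal.toReal_ofReal (by linarith)]
      exact inv_pos.2 (by linarith)
    have hI2 : 0 ≤ ∫ w in Icc ylo yhi, θ w * gc w := by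
      by_contra hcon
      push_neg at hcon
      nlinarith
    -- the small interval J
    set ε' : ℝ := min (δ / 2) (yhi - ylo) with hεdef
    have hε : 0 < ε' := lt_min (by linarith) (by linarith)
    set a : ℝ := max ylo (u - ε') with hadef
    set b : ℝ := min yhi (u + ε') with hbdef
    have hab : a < b := by
      rcases le_or_gt ylo (u - ε') with h | h
      · rw [hadef, max_eq_right h]
        exact lt_min (by linarith [hu.2]) (by linarith)
      · rw [hadef, max_eq_left h.le]
        exact lt_min hY (by linarith [hu.1])
    have hau : u - ε' ≤ a := le_max_right _ _
    have hbu : b ≤ u + ε' := min_le_right _ _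
    have hεδ : ε' ≤ δ / 2 := min_le_left _ _
    have habs : ∀ w ∈ Icc a b, |w - u| ≤ ε' := fun w hw =>
      abs_le.2 ⟨by linarith [hw.1], by linarith [hw.2]⟩
    have hθlow : ∀ w ∈ Icc a b, δ / 2 ≤ θ w := by
      intro w hw
      refine le_trans ?_ (le_max_left _ _)
      linarith [habs w hw]
    have hgcJ : ∀ w ∈ Icc a b, gc w < gc u / 2 := fun w hw =>
      hclose w (lt_of_le_of_lt (habs w hw) (by linarith))
    have hnonpos : ∀ w, θ w * gc w ≤ 0 := by
      intro w
      rcases lt_or_ge (|w - u|) δ with h | h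
      · exact mul_nonpos_iff.2 (Or.inl ⟨hθ0 w, by linarith [hclose w h]⟩)
      · rw [hθdef]
        simp only [max_eq_right (by linarith : δ - |w - u| ≤ 0), zero_mul]
        exact le_rfl
    have hintc : Continuous fun w => θ w * gc w := hθc.mul hgccont
    have h1 : ∫ w in Icc ylo yhi, θ w * gc w ≤ ∫ w in Icc a b, θ w * gc w := by
      have hm := setIntegral_mono_set (μ := volume) (s := Icc a b) (t := Icc ylo yhi)
        (f := fun w => -(θ w * gc w))
        ((hintc.neg).integrableOn_Icc)
        (ae_of_all _ fun w => neg_nonneg.2 (hnonpos w))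
        (HasSubset.Subset.eventuallyLE (Icc_subset_Icc (le_max_left _ _) (min_le_left _ _)))
      rw [integral_neg, integral_neg] at hm
      linarith
    have h2 : ∫ w in Icc a b, θ w * gc w ≤ ∫ w in Icc a b, ((δ / 2) * (gc u / 2)) := by
      refine setIntegral_mono_on hintc.integrableOn_Icc
        (integrableOn_const (by simp [Real.volume_Icc]))
        measurableSet_Icc fun w hw => ?_
      calc θ w * gc w ≤ θ w * (gc u / 2) :=
            mul_le_mul_of_nonneg_left (hgcJ w hw).le (hθ0 w)
        _ ≤ (δ / 2) * (gc u / 2) :=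
            mul_le_mul_of_nonpos_right (hθlow w hw) (by linarith)
    have h3 : ∫ _w in Icc a b, ((δ / 2) * (gc u / 2)) ∂volume
        = (b - a) * ((δ / 2) * (gc u / 2)) := by
      rw [setIntegral_const, Real.volume_real_Icc_of_le hab.le, smul_eq_mul]
    have h4 : (b - a) * ((δ / 2) * (gc u / 2)) < 0 :=
      mul_neg_of_pos_of_neg (by linarith) (mul_neg_of_pos_of_neg (by linarith) (by linarith))
    linarith
  -- conclusion
  simp only [deriv_fst_eq hψ, deriv_snd_eq hψ, sign_mul_eq f]
  have := hpos v hv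
  rw [hgcdef] at this
  simpa only [hclampid v hv, Gfun] using this
end
end

section
/- Handelman's Positivstellensatz for a rectangle: let T > 0 and L < R, and let p ∈ ℝ[t,x] be a polynomial that is strictly positive at every point of [0,T]×[L,R]. Then there exist finitely many multi-indices α = (α₁,α₂,α₃,α₄) ∈ ℕ⁴ and strictly positive real coefficients c_α such that p(t,x) = Σ_α c_α · t^{α₁}(T−t)^{α₂}(x−L)^{α₃}(R−x)^{α₄} identically. -/
open Set Finset

namespace HandelmanAux

noncomputable def A (n k i : ℕ) : ℝ := (i.choose k : ℝ) / (n.choose k : ℝ)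

lemma A_succ (n k i : ℕ) (hk : k < n) :
    A n (k+1) i = A n k i * (((i - k : ℕ) : ℝ) / ((n - k : ℕ) : ℝ)) := by
  have h1 : ((i.choose (k+1) : ℕ) : ℝ) * (k+1) = (i.choose k : ℝ) * ((i - k : ℕ) : ℝ) := by
    exact_mod_cast congrArg (Nat.cast (R := ℝ)) (Nat.choose_succ_right_eq i k)
  have h2 : ((n.choose (k+1) : ℕ) : ℝ) * (k+1) = (n.choose k : ℝ) * ((n - k : ℕ) : ℝ) := by
    exact_mod_cast congrArg (Nat.cast (R := ℝ)) (Nat.choose_succ_right_eq n k)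
  have hnk : (0:ℝ) < ((n - k : ℕ) : ℝ) := by
    have : 0 < n - k := Nat.sub_pos_of_lt hk
    exact_mod_cast this
  have hck : (0:ℝ) < (n.choose k : ℝ) := by exact_mod_cast Nat.choose_pos hk.le
  have hck1 : (0:ℝ) < (n.choose (k+1) : ℝ) := by exact_mod_cast Nat.choose_pos hk
  have hk1 : (0:ℝ) < ((k:ℝ)+1) := by positivity
  unfold A
  rw [div_mul_div_comm, div_eq_div_iff (by positivity) (by positivity)]
  nlinarith [h1, h2]

lemma A_bounds (n : ℕ) (hn : 0 < n) (i : ℕ) (hi : i ≤ n) :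
    ∀ k, k ≤ n → 0 ≤ A n k i ∧ A n k i ≤ ((i:ℝ)/n)^k ∧
      ((i:ℝ)/n)^k - A n k i ≤ (k:ℝ)*k/n := by
  have hn' : (0:ℝ) < n := by exact_mod_cast hn
  have hx0 : (0:ℝ) ≤ (i:ℝ)/n := by positivity
  have hx1 : (i:ℝ)/n ≤ 1 := by
    rw [div_le_one hn']; exact_mod_cast hi
  have hin : (i:ℝ) ≤ n := by exact_mod_cast hi
  intro k
  induction k with
  | zero => intro _; simp [A]
  | succ k ih =>
    intro hk1
    have hk : k < n := hk1
    obtain ⟨h0, hle, hdiff⟩ := ih hk.le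
    set x := (i:ℝ)/n with hxdef
    set c := (((i - k : ℕ) : ℝ) / ((n - k : ℕ) : ℝ)) with hcdef
    have hnk : (0:ℝ) < ((n - k : ℕ) : ℝ) := by
      have : 0 < n - k := Nat.sub_pos_of_lt hk
      exact_mod_cast this
    have hc0 : 0 ≤ c := by positivity
    have hcx : c ≤ x := by
      rcases le_or_gt i k with h | h
      · simp [hcdef, Nat.sub_eq_zero_of_le h]; exact hx0
      · rw [hcdef, hxdef, div_le_div_iff₀ hnk hn']
        have hik : ((i - k : ℕ) : ℝ) = (i:ℝ) - k := by
          push_cast [Nat.cast_sub h.le]; ring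
        have hnkr : ((n - k : ℕ) : ℝ) = (n:ℝ) - k := by
          push_cast [Nat.cast_sub hk.le]; ring
        rw [hik, hnkr]
        have hki : (k:ℝ) ≤ i := by exact_mod_cast h.le
        have hkn : (0:ℝ) ≤ k := by positivity
        nlinarith [mul_nonneg hkn (sub_nonneg.2 hin)]
    have hxc : x - c ≤ k/n := by
      rcases le_or_gt i k with h | h
      · simp [hcdef, Nat.sub_eq_zero_of_le h, hxdef]
        have : (i:ℝ) ≤ k := by exact_mod_cast h
        gcongr -- (i:ℝ)/n ≤ k/n ... check
      · have hik : ((i - k : ℕ) : ℝ) = (i:ℝ) - k := by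
          push_cast [Nat.cast_sub h.le]; ring
        have hnkr : ((n - k : ℕ) : ℝ) = (n:ℝ) - k := by
          push_cast [Nat.cast_sub hk.le]; ring
        rw [hcdef, hik, hnkr, hxdef]
        rw [div_sub_div _ _ (ne_of_gt hn') (by rw [hnkr] at hnk; linarith), div_le_div_iff₀ (by nlinarith) hn']
        have hki : (k:ℝ) ≤ i := by exact_mod_cast h.le
        have hkn : (0:ℝ) ≤ k := by positivity
        nlinarith [mul_nonneg (mul_nonneg hkn hn'.le) (sub_nonneg.2 hki)]
    rw [A_succ n k i hk]
    have hA1 : A n k i ≤ 1 := hle.trans (pow_le_one₀ hx0 hx1)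
    have hxk0 : (0:ℝ) ≤ x ^ k := by positivity
    have hxk1 : x ^ k ≤ 1 := pow_le_one₀ hx0 hx1
    refine ⟨mul_nonneg h0 hc0, ?_, ?_⟩
    · rw [pow_succ]
      exact mul_le_mul hle hcx hc0 hxk0
    · have key : x^(k+1) - A n k i * c ≤ (x^k - A n k i) + (x - c) := by
        rw [pow_succ]
        nlinarith [mul_nonneg (sub_nonneg.2 hle) (sub_nonneg.2 hx1),
          mul_nonneg (sub_nonneg.2 hcx) (sub_nonneg.2 hA1)]
      have hfin : (k:ℝ)*k/n + (k:ℝ)/n ≤ ((k:ℝ)+1)*((k:ℝ)+1)/n := by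
        rw [← add_div]
        gcongr
        have hkr : (0:ℝ) ≤ (k:ℝ) := Nat.cast_nonneg k
        nlinarith
      push_cast
      linarith [key, hdiff, hxc, hfin]

lemma pow_eq_bern (n k : ℕ) (hk : k ≤ n) (u : ℝ) :
    u ^ k = ∑ i ∈ range (n+1), A n k i * (n.choose i : ℝ) * (u^i * (1-u)^(n-i)) := by
  have h1 : (u + (1-u)) ^ (n-k) = 1 := by norm_num
  have h2 := add_pow u (1-u) (n-k)
  rw [h1] at h2
  have h3 : u ^ k = ∑ m ∈ range (n-k+1), u^(k+m) * (1-u)^(n-k-m) * ((n-k).choose m : ℝ) := by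
    calc u ^ k = u ^ k * 1 := by ring
    _ = u ^ k * ∑ m ∈ range (n-k+1), u^m * (1-u)^(n-k-m) * ((n-k).choose m : ℝ) := by rw [← h2]
    _ = ∑ m ∈ range (n-k+1), u^(k+m) * (1-u)^(n-k-m) * ((n-k).choose m : ℝ) := by
        rw [Finset.mul_sum]; apply Finset.sum_congr rfl; intro m _; ring
  rw [h3]
  -- now transform RHS of goal
  have hsplit : ∑ i ∈ range (n+1), A n k i * (n.choose i : ℝ) * (u^i * (1-u)^(n-i))
      = ∑ i ∈ Ico k (n+1), A n k i * (n.choose i : ℝ) * (u^i * (1-u)^(n-i)) := by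
    rw [Finset.range_eq_Ico, ← Finset.sum_Ico_consecutive _ (Nat.zero_le k) (by omega)]
    have : ∑ i ∈ Finset.Ico 0 k, A n k i * (n.choose i : ℝ) * (u^i * (1-u)^(n-i)) = 0 := by
      apply Finset.sum_eq_zero
      intro i hi
      simp only [Finset.mem_Ico] at hi
      have : i.choose k = 0 := Nat.choose_eq_zero_of_lt hi.2
      simp [A, this]
    rw [this, zero_add]
  rw [hsplit, Finset.sum_Ico_eq_sum_range]
  have hrange : n + 1 - k = n - k + 1 := by omega
  rw [hrange]
  apply Finset.sum_congr rfl
  intro m hm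
  simp only [Finset.mem_range] at hm
  have hm' : m ≤ n - k := by omega
  have hkm : k + m ≤ n := by omega
  have hexp : n - (k+m) = n - k - m := by omega
  have hcoeff : A n k (k+m) * (n.choose (k+m) : ℝ) = ((n-k).choose m : ℝ) := by
    have hid := Nat.choose_mul (n := n) (Nat.le_add_right k m)
    -- n.choose (k+m) * (k+m).choose k = n.choose k * (n-k).choose ((k+m)-k)
    have hsub : k + m - k = m := by omega
    rw [hsub] at hid
    have hck : (0:ℝ) < (n.choose k : ℝ) := by exact_mod_cast Nat.choose_pos hk
    have : ((n.choose (k+m) : ℕ):ℝ) * ((k+m).choose k : ℝ) = (n.choose k : ℝ) * ((n-k).choose m : ℝ) := by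
      exact_mod_cast congrArg (Nat.cast (R := ℝ)) hid
    unfold A
    field_simp
    linarith [this]
  rw [hexp, ← hcoeff]
  ring

end HandelmanAux

open HandelmanAux MvPolynomial

/-- Handelman's Positivstellensatz on the rectangle `[0,T] × [L,R]`: every
polynomial strictly positive on the rectangle is a finite positive linear
combination of products of powers of the affine generators
`t, T−t, x−L, R−x`. -/
theorem handelman_rectangle
    (T L R : ℝ) (hT : 0 < T) (hLR : L < R)
    (p : MvPolynomial (Fin 2) ℝ)
    (hp : ∀ t ∈ Icc 0 T, ∀ x ∈ Icc L R, 0 < MvPolynomial.eval ![t, x] p) :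
    ∃ (S : Finset (ℕ × ℕ × ℕ × ℕ)) (c : ℕ × ℕ × ℕ × ℕ → ℝ),
      (∀ α ∈ S, 0 < c α) ∧
      ∀ t x : ℝ, MvPolynomial.eval ![t, x] p =
        ∑ α ∈ S, c α * t ^ α.1 * (T - t) ^ α.2.1
          * (x - L) ^ α.2.2.1 * (R - x) ^ α.2.2.2 := by
  classical
  set D := R - L with hDdef
  have hD : 0 < D := by simp [hDdef]; linarith
  obtain ⟨q, hqeval⟩ : ∃ q : MvPolynomial (Fin 2) ℝ,
      ∀ u v : ℝ, eval ![u, v] q = eval ![T*u, L+D*v] p := by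
    refine ⟨MvPolynomial.bind₁ ![MvPolynomial.C T * MvPolynomial.X 0,
      MvPolynomial.C L + MvPolynomial.C D * MvPolynomial.X 1] p, ?_⟩
    intro u v
    have e1 : ∀ (f : Fin 2 → ℝ) (r : MvPolynomial (Fin 2) ℝ), aeval f r = eval f r := by
      intro f r
      rw [← coe_aeval_eq_eval]
      rfl
    rw [← e1, aeval_bind₁, e1]
    have h2 : (fun i => aeval ![u,v] (![MvPolynomial.C T * MvPolynomial.X 0,
        MvPolynomial.C L + MvPolynomial.C D * MvPolynomial.X 1] i)) = ![T*u, L+D*v] := by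
      funext i
      fin_cases i <;> simp
    rw [h2]
  -- evaluation formula
  have heval : ∀ (f : MvPolynomial (Fin 2) ℝ) (u v : ℝ),
      eval ![u, v] f = ∑ m ∈ f.support, coeff m f * (u ^ m 0 * v ^ m 1) := by
    intro f u v
    rw [eval_eq']
    apply Finset.sum_congr rfl
    intro m _
    congr 1
    rw [Fin.prod_univ_two]
    simp
  -- positivity of q on unit square
  have hqpos : ∀ u ∈ Icc (0:ℝ) 1, ∀ v ∈ Icc (0:ℝ) 1, 0 < eval ![u, v] q := by
    intro u hu v hv
    rw [hqeval]
    apply hp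
    · constructor
      · exact mul_nonneg hT.le hu.1
      · calc T * u ≤ T * 1 := by gcongr; exact hu.2
          _ = T := by ring
    · constructor
      · nlinarith [hu.1, hv.1]
      · have : L + D * v ≤ L + D * 1 := by gcongr; exact hv.2
        simp [hDdef] at this ⊢
        linarith
  -- minimum on the square
  obtain ⟨δ, hδ, hmin⟩ : ∃ δ : ℝ, 0 < δ ∧
      ∀ u ∈ Icc (0:ℝ) 1, ∀ v ∈ Icc (0:ℝ) 1, δ ≤ eval ![u, v] q := by
    obtain ⟨z₀, hz₀K, hzmin⟩ : ∃ z₀ ∈ (Icc (0:ℝ) 1 ×ˢ Icc (0:ℝ) 1),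
        IsMinOn (fun z : ℝ × ℝ => eval ![z.1, z.2] q) (Icc (0:ℝ) 1 ×ˢ Icc (0:ℝ) 1) z₀ := by
      apply IsCompact.exists_isMinOn
      · exact isCompact_Icc.prod isCompact_Icc
      · exact ⟨(0,0), by simp⟩
      · apply Continuous.continuousOn
        apply (MvPolynomial.continuous_eval (p := q)).comp
        apply continuous_pi
        intro i
        fin_cases i <;> simp <;> [exact continuous_fst; exact continuous_snd]
    refine ⟨eval ![z₀.1, z₀.2] q,
      hqpos z₀.1 (mem_prod.1 hz₀K).1 z₀.2 (mem_prod.1 hz₀K).2, ?_⟩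
    intro u hu v hv
    exact isMinOn_iff.mp hzmin (u, v) (Set.mem_prod.2 ⟨hu, hv⟩)
  obtain ⟨d, hddef⟩ : ∃ d : ℕ, d = q.totalDegree := ⟨_, rfl⟩
  obtain ⟨M, hM0, hMdef⟩ : ∃ M : ℝ, 0 ≤ M ∧ M = ∑ m ∈ q.support, |coeff m q| :=
    ⟨_, Finset.sum_nonneg fun m _ => abs_nonneg _, rfl⟩
  -- choose n
  obtain ⟨n, hn⟩ := exists_nat_gt (max (d:ℝ) (M * (2*(d:ℝ)*(d:ℝ)) / δ))
  have hnR : (0:ℝ) < n := by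
    refine lt_of_le_of_lt ?_ hn
    exact le_trans (Nat.cast_nonneg d) (le_max_left _ _)
  have hn0 : 0 < n := by exact_mod_cast hnR
  have hdn : d ≤ n := by
    have : (d:ℝ) < n := lt_of_le_of_lt (le_max_left _ _) hn
    exact_mod_cast this.le
  have hMn : M * (2*(d:ℝ)*(d:ℝ)) < δ * n := by
    have h1 : M * (2*(d:ℝ)*(d:ℝ)) / δ < n := lt_of_le_of_lt (le_max_right _ _) hn
    rw [div_lt_iff₀ hδ] at h1
    linarith
  have hsup : ∀ m ∈ q.support, m 0 ≤ d ∧ m 1 ≤ d := by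
    intro m hm
    rw [hddef]
    refine ⟨le_trans ?_ (degreeOf_le_totalDegree q 0), le_trans ?_ (degreeOf_le_totalDegree q 1)⟩
    · rw [degreeOf_eq_sup]
      exact Finset.le_sup (f := fun m => m 0) hm
    · rw [degreeOf_eq_sup]
      exact Finset.le_sup (f := fun m => m 1) hm
  -- Bernstein coefficients
  obtain ⟨b, hbdef⟩ : ∃ b : ℕ → ℕ → ℝ, ∀ i j, b i j =
      ∑ m ∈ q.support, coeff m q * A n (m 0) i * A n (m 1) j := ⟨_, fun _ _ => rfl⟩
  have hbpos : ∀ i ≤ n, ∀ j ≤ n, 0 < b i j := by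
    intro i hi j hj
    have hx : ((i:ℝ)/n) ∈ Icc (0:ℝ) 1 :=
      ⟨by positivity, by rw [div_le_one hnR]; exact_mod_cast hi⟩
    have hy : ((j:ℝ)/n) ∈ Icc (0:ℝ) 1 :=
      ⟨by positivity, by rw [div_le_one hnR]; exact_mod_cast hj⟩
    have hE : ∀ m ∈ q.support,
        coeff m q * (((i:ℝ)/n) ^ m 0 * ((j:ℝ)/n) ^ m 1)
          - coeff m q * A n (m 0) i * A n (m 1) j
          ≤ |coeff m q| * (2*(d:ℝ)*d/n) := by
      intro m hm
      obtain ⟨hk, hl⟩ := hsup m hm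
      obtain ⟨hA0, hAle, hAd⟩ := A_bounds n hn0 i hi (m 0) (le_trans hk hdn)
      obtain ⟨hB0, hBle, hBd⟩ := A_bounds n hn0 j hj (m 1) (le_trans hl hdn)
      have hxk1 : ((i:ℝ)/n) ^ m 0 ≤ 1 := pow_le_one₀ hx.1 hx.2
      have hyl1 : ((j:ℝ)/n) ^ m 1 ≤ 1 := pow_le_one₀ hy.1 hy.2
      have hyl0 : (0:ℝ) ≤ ((j:ℝ)/n) ^ m 1 := pow_nonneg hy.1 _
      have hxk0 : (0:ℝ) ≤ ((i:ℝ)/n) ^ m 0 := pow_nonneg hx.1 _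
      have hA1 : A n (m 0) i ≤ 1 := hAle.trans hxk1
      have hkd : ((m 0 : ℕ):ℝ) * ((m 0 : ℕ):ℝ) / n ≤ (d:ℝ)*d/n := by
        gcongr <;> exact_mod_cast hk
      have hld : ((m 1 : ℕ):ℝ) * ((m 1 : ℕ):ℝ) / n ≤ (d:ℝ)*d/n := by
        gcongr <;> exact_mod_cast hl
      have he0 : 0 ≤ ((i:ℝ)/n) ^ m 0 * ((j:ℝ)/n) ^ m 1 - A n (m 0) i * A n (m 1) j := by
        nlinarith
      have heE : ((i:ℝ)/n) ^ m 0 * ((j:ℝ)/n) ^ m 1 - A n (m 0) i * A n (m 1) j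
          ≤ 2*(d:ℝ)*d/n := by
        have h1 : (((i:ℝ)/n) ^ m 0 - A n (m 0) i) * ((j:ℝ)/n) ^ m 1
            ≤ ((d:ℝ)*d/n) * 1 :=
          mul_le_mul (hAd.trans hkd) hyl1 hyl0 (by positivity)
        have h2 : A n (m 0) i * (((j:ℝ)/n) ^ m 1 - A n (m 1) j) ≤ 1 * ((d:ℝ)*d/n) :=
          mul_le_mul hA1 (hBd.trans hld) (sub_nonneg.2 hBle) (by norm_num)
        calc ((i:ℝ)/n) ^ m 0 * ((j:ℝ)/n) ^ m 1 - A n (m 0) i * A n (m 1) j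
            = (((i:ℝ)/n) ^ m 0 - A n (m 0) i) * ((j:ℝ)/n) ^ m 1
              + A n (m 0) i * (((j:ℝ)/n) ^ m 1 - A n (m 1) j) := by ring
          _ ≤ ((d:ℝ)*d/n) * 1 + 1 * ((d:ℝ)*d/n) := add_le_add h1 h2
          _ = 2*(d:ℝ)*d/n := by ring
      calc coeff m q * (((i:ℝ)/n) ^ m 0 * ((j:ℝ)/n) ^ m 1)
            - coeff m q * A n (m 0) i * A n (m 1) j
          = coeff m q * (((i:ℝ)/n) ^ m 0 * ((j:ℝ)/n) ^ m 1
              - A n (m 0) i * A n (m 1) j) := by ring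
        _ ≤ |coeff m q| * (((i:ℝ)/n) ^ m 0 * ((j:ℝ)/n) ^ m 1
              - A n (m 0) i * A n (m 1) j) :=
            mul_le_mul_of_nonneg_right (le_abs_self _) he0
        _ ≤ |coeff m q| * (2*(d:ℝ)*d/n) :=
            mul_le_mul_of_nonneg_left heE (abs_nonneg _)
    have hqxy : δ ≤ eval ![(i:ℝ)/n, (j:ℝ)/n] q := hmin _ hx _ hy
    rw [heval q] at hqxy
    have hsum : (∑ m ∈ q.support, coeff m q * (((i:ℝ)/n) ^ m 0 * ((j:ℝ)/n) ^ m 1))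
        - b i j ≤ M * (2*(d:ℝ)*d/n) := by
      rw [hbdef i j, ← Finset.sum_sub_distrib]
      calc ∑ m ∈ q.support, (coeff m q * (((i:ℝ)/n) ^ m 0 * ((j:ℝ)/n) ^ m 1)
              - coeff m q * A n (m 0) i * A n (m 1) j)
          ≤ ∑ m ∈ q.support, |coeff m q| * (2*(d:ℝ)*d/n) := Finset.sum_le_sum hE
        _ = M * (2*(d:ℝ)*d/n) := by rw [hMdef, Finset.sum_mul]
    have hlt : M * (2*(d:ℝ)*d/n) < δ := by
      rw [← mul_div_assoc, div_lt_iff₀ hnR]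
      linarith [hMn]
    linarith
  have hrep : ∀ u v : ℝ, eval ![u, v] q = ∑ i ∈ range (n+1), ∑ j ∈ range (n+1),
      b i j * (n.choose i : ℝ) * (n.choose j : ℝ)
        * (u^i * (1-u)^(n-i)) * (v^j * (1-v)^(n-j)) := by
    intro u v
    rw [heval q u v]
    have hterm : ∀ m ∈ q.support, coeff m q * (u ^ m 0 * v ^ m 1) =
        ∑ i ∈ range (n+1), ∑ j ∈ range (n+1),
          coeff m q * A n (m 0) i * A n (m 1) j * (n.choose i : ℝ) * (n.choose j : ℝ)
            * (u^i * (1-u)^(n-i)) * (v^j * (1-v)^(n-j)) := by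
      intro m hm
      rw [pow_eq_bern n (m 0) (le_trans (hsup m hm).1 hdn) u,
          pow_eq_bern n (m 1) (le_trans (hsup m hm).2 hdn) v, Finset.sum_mul_sum,
          Finset.mul_sum]
      refine Finset.sum_congr rfl fun i _ => ?_
      rw [Finset.mul_sum]
      refine Finset.sum_congr rfl fun j _ => ?_
      ring
    rw [Finset.sum_congr rfl hterm, Finset.sum_comm]
    refine Finset.sum_congr rfl fun i _ => ?_
    rw [Finset.sum_comm]
    refine Finset.sum_congr rfl fun j _ => ?_
    rw [hbdef i j, Finset.sum_mul, Finset.sum_mul, Finset.sum_mul, Finset.sum_mul]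
  -- final assembly
  refine ⟨(range (n+1) ×ˢ range (n+1)).image (fun ij => (ij.1, n - ij.1, ij.2, n - ij.2)),
    fun α => b α.1 α.2.2.1 * (n.choose α.1 : ℝ) * (n.choose α.2.2.1 : ℝ) / (T^n * D^n),
    ?_, ?_⟩
  · intro α hα
    simp only [Finset.mem_image, Finset.mem_product, Finset.mem_range] at hα
    obtain ⟨ij, ⟨hi, hj⟩, rfl⟩ := hα
    have h1 : 0 < b ij.1 ij.2 := hbpos ij.1 (by omega) ij.2 (by omega)
    have h2 : (0:ℝ) < n.choose ij.1 := by exact_mod_cast Nat.choose_pos (by omega : ij.1 ≤ n)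
    have h3 : (0:ℝ) < n.choose ij.2 := by exact_mod_cast Nat.choose_pos (by omega : ij.2 ≤ n)
    positivity
  · intro t x
    rw [Finset.sum_image (fun a _ b' _ hab => by
      simp only [Prod.mk.injEq] at hab
      exact Prod.ext hab.1 hab.2.2.1)]
    rw [Finset.sum_product]
    have hu : T * (t/T) = t := by field_simp
    have hv : L + D * ((x-L)/D) = x := by field_simp; ring
    have := hqeval (t/T) ((x-L)/D)
    rw [hu, hv] at this
    rw [← this, hrep]
    apply Finset.sum_congr rfl
    intro i hi
    apply Finset.sum_congr rfl
    intro j hj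
    simp only [Finset.mem_range] at hi hj
    have hTi : (t/T)^i * (1-t/T)^(n-i) = t^i * (T-t)^(n-i) / T^n := by
      have h1 : (1 : ℝ) - t/T = (T-t)/T := by field_simp
      rw [h1, div_pow, div_pow, div_mul_div_comm, ← pow_add,
        show i + (n-i) = n from by omega]
    have hXj : ((x-L)/D)^j * (1-(x-L)/D)^(n-j) = (x-L)^j * (R-x)^(n-j) / D^n := by
      have h1 : (1 : ℝ) - (x-L)/D = (R-x)/D := by
        rw [eq_div_iff hD.ne', sub_mul, div_mul_cancel₀ _ hD.ne', hDdef]; ring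
      rw [h1, div_pow, div_pow, div_mul_div_comm, ← pow_add,
        show j + (n-j) = n from by omega]
    rw [hTi, hXj]
    have hTn : T^n ≠ 0 := by positivity
    have hDn : D^n ≠ 0 := by positivity
    field_simp
end

section
/- Putinar's Positivstellensatz: let g₁,…,g_m ∈ ℝ[w₁,…,w_n] with g₁(w) = N − Σ_{i=1}^n w_i² for some N ∈ ℕ, set g₀ = 1, and let 𝐊 = {w ∈ ℝⁿ : g₁(w) ≥ 0, …, g_m(w) ≥ 0}. If p ∈ ℝ[w₁,…,w_n] is strictly positive at every point of 𝐊, then there exist sums of squares of polynomials s₀, s₁, …, s_m ∈ ℝ[w₁,…,w_n] such that p = Σ_{j=0}^m s_j·g_j. -/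
set_option linter.unusedSectionVars false
namespace PutinarAux

open MvPolynomial

variable {n : ℕ}

local notation "A" => MvPolynomial (Fin n) ℝ

/-- Product of a square with a sum of squares. -/
lemma isSumSq_mul_self {R : Type*} [CommRing R] (x : R) {S : R} (hS : IsSumSq S) :
    IsSumSq (x * x * S) := by
  induction hS with
  | zero => simpa using IsSumSq.zero
  | @sq_add a S pS ih =>
      have : x * x * (a * a + S) = (x * a) * (x * a) + x * x * S := by ring
      rw [this]
      exact IsSumSq.sq_add _ ih

lemma isSumSq_mul {R : Type*} [CommRing R] {S T : R} (hS : IsSumSq S) (hT : IsSumSq T) :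
    IsSumSq (S * T) := by
  induction hS with
  | zero => simpa using IsSumSq.zero
  | @sq_add a S pS ih =>
      have : (a * a + S) * T = a * a * T + S * T := by ring
      rw [this]
      exact (isSumSq_mul_self a hT).add ih

lemma isSumSq_sq {R : Type*} [CommRing R] (x : R) : IsSumSq (x ^ 2) := by
  have : x ^ 2 = x * x + 0 := by ring
  rw [this]; exact IsSumSq.sq_add x IsSumSq.zero

lemma isSumSq_one {R : Type*} [CommRing R] : IsSumSq (1 : R) := by
  simpa using isSumSq_sq (1 : R)

lemma isSumSq_C {c : ℝ} (hc : 0 ≤ c) : IsSumSq (C c : A) := by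
  have : (C c : A) = (C (Real.sqrt c)) ^ 2 := by
    rw [← C_pow, Real.sq_sqrt hc]
  rw [this]; exact isSumSq_sq _

/-- Quadratic module predicate. -/
def IsQM (M : Set (MvPolynomial (Fin n) ℝ)) : Prop :=
  (1 : MvPolynomial (Fin n) ℝ) ∈ M ∧
  (∀ {a b : MvPolynomial (Fin n) ℝ}, a ∈ M → b ∈ M → a + b ∈ M) ∧
  (∀ (f : MvPolynomial (Fin n) ℝ) {a : MvPolynomial (Fin n) ℝ}, a ∈ M → f ^ 2 * a ∈ M)

namespace IsQM

variable {M : Set (MvPolynomial (Fin n) ℝ)} (hM : IsQM M)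

include hM

lemma one_mem : (1 : A) ∈ M := hM.1

lemma add_mem {a b : A} (ha : a ∈ M) (hb : b ∈ M) : a + b ∈ M := hM.2.1 ha hb

lemma sq_mul_mem (f : A) {a : A} (ha : a ∈ M) : f ^ 2 * a ∈ M := hM.2.2 f ha

lemma zero_mem : (0 : A) ∈ M := by
  have := hM.sq_mul_mem 0 hM.one_mem
  simpa using this

lemma sos_mul_mem {s a : A} (hs : IsSumSq s) (ha : a ∈ M) : s * a ∈ M := by
  induction hs with
  | zero => simpa using hM.zero_mem
  | @sq_add x S pS ih =>
      have : (x * x + S) * a = x ^ 2 * a + S * a := by ring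
      rw [this]
      exact hM.add_mem (hM.sq_mul_mem x ha) ih

lemma sos_mem {s : A} (hs : IsSumSq s) : s ∈ M := by
  have := hM.sos_mul_mem hs hM.one_mem
  simpa using this

lemma const_mul_mem {c : ℝ} (hc : 0 ≤ c) {a : A} (ha : a ∈ M) : C c * a ∈ M := by
  have h : (C c : A) * a = (C (Real.sqrt c)) ^ 2 * a := by
    rw [← C_pow, Real.sq_sqrt hc]
  rw [h]; exact hM.sq_mul_mem _ ha

lemma const_mem {c : ℝ} (hc : 0 ≤ c) : (C c : A) ∈ M := hM.sos_mem (isSumSq_C hc)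

lemma sum_mem {ι : Type*} {s : Finset ι} {f : ι → A} (h : ∀ i ∈ s, f i ∈ M) :
    (∑ i ∈ s, f i) ∈ M := by
  classical
  induction s using Finset.induction_on with
  | empty => simpa using hM.zero_mem
  | insert _ _ hnotmem ih =>
      rw [Finset.sum_insert hnotmem]
      exact hM.add_mem (h _ (Finset.mem_insert_self _ _))
        (ih fun i hi => h i (Finset.mem_insert_of_mem hi))

/-- Key identity: if `a, b ∈ M` and `a + b` is a positive constant, then `a*b ∈ M`. -/
lemma mul_mem_of_add_const {a b : A} {c : ℝ} (ha : a ∈ M) (hb : b ∈ M)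
    (hab : a + b = C c) (hc : 0 < c) : a * b ∈ M := by
  have h1 : b ^ 2 * a ∈ M := hM.sq_mul_mem b ha
  have h2 : a ^ 2 * b ∈ M := hM.sq_mul_mem a hb
  have h3 : b ^ 2 * a + a ^ 2 * b ∈ M := hM.add_mem h1 h2
  have h4 : C c⁻¹ * (b ^ 2 * a + a ^ 2 * b) ∈ M :=
    hM.const_mul_mem (by positivity) h3
  have h5 : C c⁻¹ * (b ^ 2 * a + a ^ 2 * b) = a * b := by
    have : b ^ 2 * a + a ^ 2 * b = C c * (a * b) := by
      rw [← hab]; ring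
    rw [this, ← mul_assoc, ← C_mul, inv_mul_cancel₀ (ne_of_gt hc), C_1, one_mul]
  rwa [h5] at h4

/-- monomials in two module elements with constant sum. -/
lemma pow_mul_pow_mem {a b : A} {c : ℝ} (ha : a ∈ M) (hb : b ∈ M)
    (hab : a + b = C c) (hc : 0 < c) : ∀ i j : ℕ, a ^ i * b ^ j ∈ M := by
  have hab' : a * b ∈ M := hM.mul_mem_of_add_const ha hb hab hc
  intro i j
  rcases Nat.even_or_odd i with ⟨i', hi⟩ | ⟨i', hi⟩ <;>
    rcases Nat.even_or_odd j with ⟨j', hj⟩ | ⟨j', hj⟩ <;> subst hi hj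
  · have h : a ^ (i' + i') * b ^ (j' + j') = (a ^ i' * b ^ j') ^ 2 * 1 := by ring
    rw [h]; exact hM.sq_mul_mem _ hM.one_mem
  · have h : a ^ (i' + i') * b ^ (2 * j' + 1) = (a ^ i' * b ^ j') ^ 2 * b := by ring
    rw [h]; exact hM.sq_mul_mem _ hb
  · have h : a ^ (2 * i' + 1) * b ^ (j' + j') = (a ^ i' * b ^ j') ^ 2 * a := by ring
    rw [h]; exact hM.sq_mul_mem _ ha
  · have h : a ^ (2 * i' + 1) * b ^ (2 * j' + 1) = (a ^ i' * b ^ j') ^ 2 * (a * b) := by ring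
    rw [h]; exact hM.sq_mul_mem _ hab'

lemma pow_mem {a : A} (ha : a ∈ M) (i : ℕ) : a ^ i ∈ M := by
  rcases Nat.even_or_odd i with ⟨i', hi⟩ | ⟨i', hi⟩ <;> subst hi
  · have h : a ^ (i' + i') = (a ^ i') ^ 2 * 1 := by ring
    rw [h]; exact hM.sq_mul_mem _ hM.one_mem
  · have h : a ^ (2 * i' + 1) = (a ^ i') ^ 2 * a := by ring
    rw [h]; exact hM.sq_mul_mem _ ha

/-- Binomial estimate: `C (c^q) - b^q ∈ M` when `a + b = C c`, `a, b ∈ M`. -/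
lemma const_pow_sub_pow_mem {a b : A} {c : ℝ} (ha : a ∈ M) (hb : b ∈ M)
    (hab : a + b = C c) (hc : 0 < c) (q : ℕ) : C (c ^ q) - b ^ q ∈ M := by
  have hexp : (C (c ^ q) : A) = (a + b) ^ q := by rw [hab, ← C_pow]
  have hbin : (a + b) ^ q = ∑ i ∈ Finset.range (q + 1), a ^ i * b ^ (q - i) * (q.choose i : A) :=
    add_pow a b q
  have hsplit : ∑ i ∈ Finset.range (q + 1), a ^ i * b ^ (q - i) * (q.choose i : A)
      = (∑ i ∈ Finset.range q, a ^ (i + 1) * b ^ (q - (i + 1)) * (q.choose (i + 1) : A))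
        + b ^ q := by
    rw [Finset.sum_range_succ']
    simp
  have hmem : (∑ i ∈ Finset.range q, a ^ (i + 1) * b ^ (q - (i + 1)) * (q.choose (i + 1) : A)) ∈ M := by
    apply hM.sum_mem
    intro i _
    have hcast : (q.choose (i + 1) : A) = C ((q.choose (i + 1) : ℝ)) := by
      simp
    rw [hcast, mul_comm]
    exact hM.const_mul_mem (by positivity) (hM.pow_mul_pow_mem ha hb hab hc _ _)
  have : C (c ^ q) - b ^ q
      = ∑ i ∈ Finset.range q, a ^ (i + 1) * b ^ (q - (i + 1)) * (q.choose (i + 1) : A) := by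
    rw [hexp, hbin, hsplit]; ring
  rw [this]; exact hmem

end IsQM

section Tmod


variable {m : ℕ} (g : Fin m → MvPolynomial (Fin n) ℝ)

/-- The quadratic module generated by `g 0, …, g (m-1)`. -/
def Tset : Set (MvPolynomial (Fin n) ℝ) :=
  {f | ∃ s : Fin (m + 1) → MvPolynomial (Fin n) ℝ,
    (∀ j, IsSumSq (s j)) ∧ f = s 0 + ∑ j : Fin m, s j.succ * g j}

lemma isSumSq_zero' : IsSumSq (0 : A) := IsSumSq.zero

lemma T_isQM : IsQM (Tset g) := by
  refine ⟨?_, ?_, ?_⟩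
  · refine ⟨fun j => if j = 0 then 1 else 0, fun j => ?_, ?_⟩
    · by_cases h : j = 0 <;> simp [h] <;> first
        | exact (by simpa using (by exact IsSumSq.sq_add 1 0 IsSumSq.zero : IsSumSq ((1:A)*1+0)))
        | exact IsSumSq.zero
    · simp [Fin.succ_ne_zero]
  · rintro a b ⟨s, hs, rfl⟩ ⟨t, ht, rfl⟩
    refine ⟨fun j => s j + t j, fun j => (hs j).add (ht j), ?_⟩
    simp only []
    rw [show (∀ j:Fin m, True) → (∑ j : Fin m, (s j.succ + t j.succ) * g j)
        = ∑ j : Fin m, s j.succ * g j + ∑ j : Fin m, t j.succ * g j from fun _ => by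
      rw [← Finset.sum_add_distrib]; apply Finset.sum_congr rfl; intro j _; ring]
    · ring
    · intro j; trivial
  · rintro f a ⟨s, hs, rfl⟩
    refine ⟨fun j => f ^ 2 * s j, fun j => by
      simpa [pow_two] using isSumSq_mul (isSumSq_sq f) (hs j), ?_⟩
    simp only []
    rw [mul_add, Finset.mul_sum]
    congr 1
    apply Finset.sum_congr rfl; intro j _; ring


lemma g_mem_T (j : Fin m) : g j ∈ Tset g := by
  classical
  refine ⟨Fin.cases 0 (fun l => if l = j then 1 else 0), ?_, ?_⟩
  · intro l
    refine Fin.cases ?_ (fun l' => ?_) l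
    · simpa using (IsSumSq.zero : IsSumSq (0:A))
    · simp only [Fin.cases_succ]
      by_cases h : l' = j
      · simpa [h] using (isSumSq_one : IsSumSq (1:A))
      · simpa [h] using (IsSumSq.zero : IsSumSq (0:A))
  · simp only [Fin.cases_zero, Fin.cases_succ, zero_add]
    rw [Finset.sum_congr rfl (fun l (_ : l ∈ Finset.univ) => by
      rw [show ((if l = j then 1 else 0 : A) * g l) = if l = j then g l else 0 from by
        by_cases h : l = j <;> simp [h]])]
    simp

lemma sos_mem_T {s : A} (hs : IsSumSq s) : s ∈ Tset g := (T_isQM g).sos_mem hs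

end Tmod


section Arch

variable {m : ℕ} (g : Fin m → MvPolynomial (Fin n) ℝ)

/-- `f` is Archimedean-bounded. -/
def Bnd (f : A) : Prop := ∃ k : ℝ, 0 < k ∧ C k - f ∈ Tset g ∧ C k + f ∈ Tset g

lemma bnd_const (c : ℝ) : Bnd g (C c) := by
  refine ⟨|c| + 1, by positivity, ?_, ?_⟩
  · rw [show (C (|c|+1) : A) - C c = C (|c| + 1 - c) from by simp only [C_add, C_sub, C_1]]
    exact (T_isQM g).const_mem (by cases abs_cases c <;> linarith)
  · rw [show (C (|c|+1) : A) + C c = C (|c| + 1 + c) from by simp only [C_add, C_1]]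
    exact (T_isQM g).const_mem (by cases abs_cases c <;> linarith)

lemma bnd_add {f₁ f₂ : A} (h₁ : Bnd g f₁) (h₂ : Bnd g f₂) : Bnd g (f₁ + f₂) := by
  obtain ⟨k₁, hk₁, ha₁, hb₁⟩ := h₁
  obtain ⟨k₂, hk₂, ha₂, hb₂⟩ := h₂
  refine ⟨k₁ + k₂, by positivity, ?_, ?_⟩
  · rw [show (C (k₁+k₂) : A) - (f₁ + f₂) = (C k₁ - f₁) + (C k₂ - f₂) from by
      rw [C_add]; ring]
    exact (T_isQM g).add_mem ha₁ ha₂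
  · rw [show (C (k₁+k₂) : A) + (f₁ + f₂) = (C k₁ + f₁) + (C k₂ + f₂) from by
      rw [C_add]; ring]
    exact (T_isQM g).add_mem hb₁ hb₂

lemma bnd_neg {f : A} (h : Bnd g f) : Bnd g (-f) := by
  obtain ⟨k, hk, ha, hb⟩ := h
  exact ⟨k, hk, by rw [sub_neg_eq_add]; exact hb,
    by rw [show (C k : A) + -f = C k - f from by ring]; exact ha⟩

lemma bnd_sq_aux {f : A} (h : Bnd g f) :
    ∃ k : ℝ, 0 < k ∧ C k - f ^ 2 ∈ Tset g ∧ C k + f ^ 2 ∈ Tset g := by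
  obtain ⟨k, hk, ha, hb⟩ := h
  have hprod : (C k - f) * (C k + f) ∈ Tset g := by
    refine (T_isQM g).mul_mem_of_add_const ha hb ?_ (by positivity : (0:ℝ) < k + k)
    rw [C_add]; ring
  have h1 : C (k ^ 2) - f ^ 2 ∈ Tset g := by
    rw [show (C (k^2) : A) - f^2 = (C k - f) * (C k + f) from by rw [C_pow]; ring]
    exact hprod
  refine ⟨k ^ 2, by positivity, h1, ?_⟩
  have h2 : C (k ^ 2) + f ^ 2 = (C (k ^ 2) - f ^ 2) + (f ^ 2 + f ^ 2 * 1) := by ring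
  rw [h2]
  exact (T_isQM g).add_mem h1 ((T_isQM g).add_mem (sos_mem_T g (isSumSq_sq f))
    ((T_isQM g).sq_mul_mem f (T_isQM g).one_mem))

lemma bnd_mul {f₁ f₂ : A} (h₁ : Bnd g f₁) (h₂ : Bnd g f₂) : Bnd g (f₁ * f₂) := by
  obtain ⟨a, ha0, ha1, ha2⟩ := bnd_sq_aux g (bnd_add g h₁ h₂)
  obtain ⟨b, hb0, hb1, hb2⟩ := bnd_sq_aux g (bnd_add g h₁ (bnd_neg g h₂))
  have key1 : C (a + b) - 4 * (f₁ * f₂) ∈ Tset g := by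
    rw [show (C (a+b) : A) - 4*(f₁*f₂) = (C a - (f₁+f₂)^2) + (C b + (f₁+(-f₂))^2) from by
      rw [C_add]; ring]
    exact (T_isQM g).add_mem ha1 hb2
  have key2 : C (a + b) + 4 * (f₁ * f₂) ∈ Tset g := by
    rw [show (C (a+b) : A) + 4*(f₁*f₂) = (C a + (f₁+f₂)^2) + (C b - (f₁+(-f₂))^2) from by
      rw [C_add]; ring]
    exact (T_isQM g).add_mem ha2 hb1
  refine ⟨(a + b)/4, by positivity, ?_, ?_⟩
  · rw [show (C ((a+b)/4) : A) - f₁*f₂ = C (1/4) * (C (a+b) - 4*(f₁*f₂)) from by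
      rw [mul_sub, ← C_mul, show ((1:ℝ)/4*(a+b)) = (a+b)/4 from by ring,
        show (4:A) = C (4:ℝ) from (map_ofNat C 4).symm, ← mul_assoc, ← C_mul]
      norm_num]
    exact (T_isQM g).const_mul_mem (by norm_num) key1
  · rw [show (C ((a+b)/4) : A) + f₁*f₂ = C (1/4) * (C (a+b) + 4*(f₁*f₂)) from by
      rw [mul_add, ← C_mul, show ((1:ℝ)/4*(a+b)) = (a+b)/4 from by ring,
        show (4:A) = C (4:ℝ) from (map_ofNat C 4).symm, ← mul_assoc, ← C_mul]
      norm_num]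
    exact (T_isQM g).const_mul_mem (by norm_num) key2

variable {N : ℕ} {hm : 0 < m}
  (hg1 : g ⟨0, hm⟩ = C (N : ℝ) - ∑ i : Fin n, X i ^ 2)

include hg1 in
lemma bnd_X (i : Fin n) : Bnd g (X i) := by
  classical
  have hNX : C (N : ℝ) - X i ^ 2 ∈ Tset g := by
    have hsum : (∑ l : Fin n, (X l : A) ^ 2) = X i ^ 2 + ∑ l ∈ Finset.univ.erase i, X l ^ 2 := by
      rw [← Finset.add_sum_erase _ _ (Finset.mem_univ i)]
    have hg : g ⟨0, hm⟩ ∈ Tset g := g_mem_T g _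
    have hrest : (∑ l ∈ Finset.univ.erase i, (X l : A) ^ 2) ∈ Tset g := by
      refine sos_mem_T g ?_
      have : (∑ l ∈ Finset.univ.erase i, (X l : A) ^ 2)
          = ∑ l ∈ Finset.univ.erase i, (X l : A) * X l := by
        apply Finset.sum_congr rfl; intro l _; ring
      rw [this]
      exact IsSumSq.sum_mul_self _ _
    have : C (N : ℝ) - X i ^ 2 = g ⟨0, hm⟩ + ∑ l ∈ Finset.univ.erase i, (X l : A) ^ 2 := by
      rw [hg1, hsum]; ring
    rw [this]
    exact (T_isQM g).add_mem hg hrest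
  have hplus : C ((N : ℝ) + 1) + 2 * X i ∈ Tset g := by
    rw [show (C ((N:ℝ)+1) : A) + 2 * X i = (X i + 1)^2 + (C (N:ℝ) - X i ^ 2) from by
      simp only [C_add, C_1]; ring]
    exact (T_isQM g).add_mem (sos_mem_T g (isSumSq_sq _)) hNX
  have hminus : C ((N : ℝ) + 1) - 2 * X i ∈ Tset g := by
    rw [show (C ((N:ℝ)+1) : A) - 2 * X i = (X i - 1)^2 + (C (N:ℝ) - X i ^ 2) from by
      simp only [C_add, C_1]; ring]
    exact (T_isQM g).add_mem (sos_mem_T g (isSumSq_sq _)) hNX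
  refine ⟨((N : ℝ) + 1)/2, by positivity, ?_, ?_⟩
  · rw [show (C (((N:ℝ)+1)/2) : A) - X i = C (1/2) * (C ((N:ℝ)+1) - 2 * X i) from by
      rw [mul_sub, ← C_mul, show ((1:ℝ)/2*((N:ℝ)+1)) = ((N:ℝ)+1)/2 from by ring,
        show (2:A) = C (2:ℝ) from (map_ofNat C 2).symm, ← mul_assoc, ← C_mul]
      norm_num]
    exact (T_isQM g).const_mul_mem (by norm_num) hminus
  · rw [show (C (((N:ℝ)+1)/2) : A) + X i = C (1/2) * (C ((N:ℝ)+1) + 2 * X i) from by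
      rw [mul_add, ← C_mul, show ((1:ℝ)/2*((N:ℝ)+1)) = ((N:ℝ)+1)/2 from by ring,
        show (2:A) = C (2:ℝ) from (map_ofNat C 2).symm, ← mul_assoc, ← C_mul]
      norm_num]
    exact (T_isQM g).const_mul_mem (by norm_num) hplus

include hg1 in
lemma bnd_all (f : A) : Bnd g f := by
  induction f using MvPolynomial.induction_on with
  | C c => exact bnd_const g c
  | add f₁ f₂ ih₁ ih₂ => exact bnd_add g ih₁ ih₂
  | mul_X f i ih => exact bnd_mul g ih (bnd_X g hg1 i)

end Arch


section Helpers

lemma half_mul (x : A) : C (1/2 : ℝ) * (2 * x) = x := by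
  rw [show (2:A) = C (2:ℝ) from (map_ofNat C 2).symm, ← mul_assoc, ← C_mul]
  norm_num

lemma quarter_mul (x : A) : C (1/4 : ℝ) * (4 * x) = x := by
  rw [show (4:A) = C (4:ℝ) from (map_ofNat C 4).symm, ← mul_assoc, ← C_mul]
  norm_num

lemma C_inv_mul_cancel {c : ℝ} (hc : c ≠ 0) (x : A) : C c⁻¹ * (C c * x) = x := by
  rw [← mul_assoc, ← C_mul, inv_mul_cancel₀ hc, C_1, one_mul]

end Helpers

section Phi

variable {m : ℕ} {g : Fin m → MvPolynomial (Fin n) ℝ} {M : Set (MvPolynomial (Fin n) ℝ)}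

/-- The state associated to a maximal proper quadratic module. -/
noncomputable def phi (M : Set (MvPolynomial (Fin n) ℝ)) (f : MvPolynomial (Fin n) ℝ) : ℝ :=
  sInf {r : ℝ | C r - f ∈ M}

variable (hM : IsQM M) (hTM : Tset g ⊆ M)
  (harch : ∀ f : MvPolynomial (Fin n) ℝ, Bnd g f)
  (hproper : (-1 : MvPolynomial (Fin n) ℝ) ∉ M)
  (htot : ∀ a : MvPolynomial (Fin n) ℝ, a ∈ M ∨ -a ∈ M)

include hM hproper in
lemma phi_const_nonneg {c : ℝ} (hc : C c ∈ M) : 0 ≤ c := by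
  by_contra h
  push_neg at h
  apply hproper
  have h1 : C (-c⁻¹) * C c ∈ M := hM.const_mul_mem (by
    have : c⁻¹ < 0 := inv_lt_zero.mpr h
    linarith) hc
  have h2 : (C (-c⁻¹) : A) * C c = -1 := by
    rw [← C_mul, show (-c⁻¹ * c : ℝ) = -1 from by
      rw [neg_mul, inv_mul_cancel₀ (ne_of_lt h)]]
    simp
  rwa [h2] at h1

include hM hTM harch in
lemma phi_setne (f : A) : {r : ℝ | C r - f ∈ M}.Nonempty := by
  obtain ⟨k, hk, h1, h2⟩ := harch f
  exact ⟨k, hTM h1⟩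

include hM hTM harch hproper in
lemma phi_bddbelow (f : A) : BddBelow {r : ℝ | C r - f ∈ M} := by
  obtain ⟨k, hk, h1, h2⟩ := harch f
  refine ⟨-k, fun r hr => ?_⟩
  have hmem : (C (r + k) : A) ∈ M := by
    rw [show (C (r+k) : A) = (C r - f) + (C k + f) from by rw [C_add]; ring]
    exact hM.add_mem hr (hTM h2)
  have := phi_const_nonneg hM hproper hmem
  linarith

include hM hTM harch hproper in
lemma phi_mem_of_lt {f : A} {r : ℝ} (h : phi M f < r) : C r - f ∈ M := by
  obtain ⟨r', hr', hlt⟩ := exists_lt_of_csInf_lt (phi_setne hM hTM harch f) h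
  rw [show (C r : A) - f = C (r - r') + (C r' - f) from by rw [C_sub]; ring]
  exact hM.add_mem (hM.const_mem (by linarith)) hr'

include hM hTM harch hproper in
lemma phi_le_of_mem {f : A} {r : ℝ} (h : C r - f ∈ M) : phi M f ≤ r :=
  csInf_le (phi_bddbelow hM hTM harch hproper f) h

include hM hTM harch hproper in
lemma phi_C (c : ℝ) : phi M (C c) = c := by
  refine le_antisymm (phi_le_of_mem hM hTM harch hproper (by
    rw [sub_self]; exact hM.zero_mem)) ?_
  refine le_csInf (phi_setne hM hTM harch _) fun r hr => ?_
  have : (C (r - c) : A) ∈ M := by rw [C_sub]; exact hr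
  have := phi_const_nonneg hM hproper this
  linarith

include hM hTM harch hproper in
lemma phi_nonneg {f : A} (hf : f ∈ M) : 0 ≤ phi M f := by
  by_contra h
  push_neg at h
  have hmem : C (phi M f / 2) - f ∈ M := phi_mem_of_lt hM hTM harch hproper (by linarith)
  have : (C (phi M f / 2) : A) ∈ M := by
    have := hM.add_mem hmem hf
    simpa using this
  have := phi_const_nonneg hM hproper this
  linarith

include hM hTM harch hproper in
lemma phi_add_le (f₁ f₂ : A) : phi M (f₁ + f₂) ≤ phi M f₁ + phi M f₂ := by
  refine le_of_forall_pos_le_add fun ε hε => ?_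
  refine phi_le_of_mem hM hTM harch hproper ?_
  rw [show (C (phi M f₁ + phi M f₂ + ε) : A) - (f₁ + f₂)
      = (C (phi M f₁ + ε/2) - f₁) + (C (phi M f₂ + ε/2) - f₂) from by
    rw [show (phi M f₁ + phi M f₂ + ε) = (phi M f₁ + ε/2) + (phi M f₂ + ε/2) from by ring,
      C_add]
    ring]
  exact hM.add_mem (phi_mem_of_lt hM hTM harch hproper (by linarith))
    (phi_mem_of_lt hM hTM harch hproper (by linarith))

include hM hTM harch hproper in
lemma phi_neg_add_nonneg (f : A) : 0 ≤ phi M f + phi M (-f) := by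
  by_contra h
  push_neg at h
  set ε := -(phi M f + phi M (-f)) / 4 with hεdef
  have hε : 0 < ε := by simp only [hεdef]; linarith
  have h1 : C (phi M f + ε) - f ∈ M := phi_mem_of_lt hM hTM harch hproper (by linarith)
  have h2 : C (phi M (-f) + ε) - (-f) ∈ M := phi_mem_of_lt hM hTM harch hproper (by linarith)
  have h3 : (C (phi M f + ε + (phi M (-f) + ε)) : A) ∈ M := by
    rw [show (C (phi M f + ε + (phi M (-f) + ε)) : A)
        = (C (phi M f + ε) - f) + (C (phi M (-f) + ε) - (-f)) from by
      rw [C_add]; ring]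
    exact hM.add_mem h1 h2
  have := phi_const_nonneg hM hproper h3
  simp only [hεdef] at this
  linarith

include hM hTM harch hproper htot in
lemma phi_neg (f : A) : phi M (-f) = -phi M f := by
  refine le_antisymm ?_ (by have := phi_neg_add_nonneg hM hTM harch hproper f; linarith)
  have key : ∀ ε > 0, phi M (-f) ≤ -phi M f + ε := by
    intro ε hε
    have hnotmem : C (phi M f - ε) - f ∉ M := by
      intro hmem
      have := phi_le_of_mem hM hTM harch hproper hmem
      linarith
    have hmem : -(C (phi M f - ε) - f) ∈ M := (htot _).resolve_left hnotmem
    have : C (-(phi M f - ε)) - (-f) ∈ M := by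
      rw [show (C (-(phi M f - ε)) : A) - (-f) = -(C (phi M f - ε) - f) from by
        rw [C_neg]; ring]
      exact hmem
    have := phi_le_of_mem hM hTM harch hproper this
    linarith
  exact le_of_forall_pos_le_add key

include hM hTM harch hproper htot in
lemma phi_add (f₁ f₂ : A) : phi M (f₁ + f₂) = phi M f₁ + phi M f₂ := by
  refine le_antisymm (phi_add_le hM hTM harch hproper f₁ f₂) ?_
  have h1 : phi M f₁ ≤ phi M (f₁ + f₂) + phi M (-f₂) := by
    have := phi_add_le hM hTM harch hproper (f₁ + f₂) (-f₂)
    simpa using this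
  have := phi_neg hM hTM harch hproper htot f₂
  linarith

include hM hTM harch hproper htot in
lemma phi_smul (c : ℝ) (f : MvPolynomial (Fin n) ℝ) : phi M (C c * f) = c * phi M f := by
  have key : ∀ d : ℝ, 0 < d → ∀ f' : MvPolynomial (Fin n) ℝ,
      phi M (C d * f') ≤ d * phi M f' := by
    intro d hd f'
    refine le_of_forall_pos_le_add fun ε hε => ?_
    have hmem : C (phi M f' + ε/d) - f' ∈ M :=
      phi_mem_of_lt hM hTM harch hproper (by
        have : 0 < ε / d := by positivity
        linarith)
    have hmem2 : C (d * (phi M f' + ε/d)) - C d * f' ∈ M := by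
      rw [show (C (d * (phi M f' + ε/d)) : A) - C d * f'
          = C d * (C (phi M f' + ε/d) - f') from by rw [mul_sub, ← C_mul]]
      exact hM.const_mul_mem (le_of_lt hd) hmem
    have h2 := phi_le_of_mem hM hTM harch hproper hmem2
    have h3 : d * (phi M f' + ε/d) = d * phi M f' + ε := by
      field_simp
    linarith [h2.trans_eq h3]
  rcases lt_trichotomy c 0 with hc | hc | hc
  · have hcpos : (0:ℝ) < -c := by linarith
    have h1 : phi M (C (-c) * (-f)) ≤ (-c) * phi M (-f) := key (-c) hcpos (-f)
    have h2 : phi M (C (-c)⁻¹ * (C (-c) * (-f))) ≤ (-c)⁻¹ * phi M (C (-c) * (-f)) :=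
      key (-c)⁻¹ (by positivity) _
    rw [C_inv_mul_cancel (ne_of_gt hcpos)] at h2
    have heq : (C (-c) : A) * (-f) = C c * f := by rw [C_neg]; ring
    rw [heq] at h1 h2
    have hneg := phi_neg hM hTM harch hproper htot f
    refine le_antisymm ?_ ?_
    · calc phi M (C c * f) ≤ -c * phi M (-f) := h1
        _ = c * phi M f := by rw [hneg]; ring
    · have h4 := mul_le_mul_of_nonneg_left h2 hcpos.le
      have h5 : (-c) * ((-c)⁻¹ * phi M (C c * f)) = phi M (C c * f) := by
        rw [← mul_assoc, mul_inv_cancel₀ (ne_of_gt hcpos), one_mul]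
      rw [h5] at h4
      calc c * phi M f = -c * phi M (-f) := by rw [hneg]; ring
        _ ≤ phi M (C c * f) := h4
  · subst hc
    rw [show (C (0:ℝ) : A) * f = C 0 from by simp]
    rw [phi_C hM hTM harch hproper]
    ring
  · have h1 : phi M (C c * f) ≤ c * phi M f := key c hc f
    have h2 : phi M (C c⁻¹ * (C c * f)) ≤ c⁻¹ * phi M (C c * f) := key c⁻¹ (by positivity) _
    rw [C_inv_mul_cancel (ne_of_gt hc)] at h2
    refine le_antisymm h1 ?_
    have h4 := mul_le_mul_of_nonneg_left h2 hc.le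
    have h5 : c * (c⁻¹ * phi M (C c * f)) = phi M (C c * f) := by
      rw [← mul_assoc, mul_inv_cancel₀ (ne_of_gt hc), one_mul]
    rw [h5] at h4
    exact h4

include hM hTM harch hproper htot in
lemma phi_sq (f : MvPolynomial (Fin n) ℝ) : phi M (f ^ 2) = (phi M f) ^ 2 := by
  set r := phi M f with hr
  set u : MvPolynomial (Fin n) ℝ := f - C r with hu
  have hphiu : phi M u = 0 := by
    rw [hu, sub_eq_add_neg, ← C_neg, phi_add hM hTM harch hproper htot,
      phi_C hM hTM harch hproper]
    simp [hr]
  have hphinu : phi M (-u) = 0 := by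
    rw [phi_neg hM hTM harch hproper htot, hphiu, neg_zero]
  have husq : ∀ ε : ℝ, 0 < ε → phi M (u ^ 2) ≤ ε ^ 2 := by
    intro ε hε
    have h1 : C ε - u ∈ M := phi_mem_of_lt hM hTM harch hproper (by rw [hphiu]; exact hε)
    have h2 : C ε + u ∈ M := by
      have := phi_mem_of_lt hM hTM harch hproper (show phi M (-u) < ε by rw [hphinu]; exact hε)
      rwa [sub_neg_eq_add] at this
    have hprod : (C ε - u) * (C ε + u) ∈ M :=
      hM.mul_mem_of_add_const h1 h2 (by rw [C_add]; ring) (by linarith)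
    have : C (ε ^ 2) - u ^ 2 ∈ M := by
      rw [show (C (ε^2) : A) - u^2 = (C ε - u) * (C ε + u) from by rw [C_pow]; ring]
      exact hprod
    exact phi_le_of_mem hM hTM harch hproper this
  have hle : phi M (u ^ 2) ≤ 0 := by
    by_contra hpos
    push_neg at hpos
    set d := phi M (u ^ 2) with hd
    have hεpos : 0 < min 1 (d / 2) := by
      simp only [lt_min_iff]; constructor <;> [norm_num; linarith]
    have := husq _ hεpos
    have hmin1 : min 1 (d/2) ≤ 1 := min_le_left _ _
    have hmin2 : min 1 (d/2) ≤ d/2 := min_le_right _ _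
    nlinarith
  have hge : 0 ≤ phi M (u ^ 2) := phi_nonneg hM hTM harch hproper (by
    have : u ^ 2 = u ^ 2 * 1 := by ring
    rw [this]; exact hM.sq_mul_mem u hM.one_mem)
  have hzero : phi M (u ^ 2) = 0 := le_antisymm hle hge
  have hexpand : u ^ 2 = f ^ 2 + (C (-(2*r)) * f + C (r ^ 2)) := by
    rw [hu, C_neg, C_mul, C_pow, show (C (2:ℝ) : A) = 2 from map_ofNat C 2]
    ring
  have := hexpand ▸ hzero
  rw [phi_add hM hTM harch hproper htot, phi_add hM hTM harch hproper htot,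
    phi_smul hM hTM harch hproper htot, phi_C hM hTM harch hproper] at this
  nlinarith [this]

include hM hTM harch hproper htot in
lemma phi_mul (f₁ f₂ : MvPolynomial (Fin n) ℝ) :
    phi M (f₁ * f₂) = phi M f₁ * phi M f₂ := by
  have hid : f₁ * f₂ = C (1/2 : ℝ) * ((f₁ + f₂)^2 + (-(f₁^2) + (-(f₂^2)))) := by
    rw [show ((f₁ + f₂)^2 + (-(f₁^2) + (-(f₂^2)))) = 2 * (f₁ * f₂) from by ring, half_mul]
  rw [hid, phi_smul hM hTM harch hproper htot, phi_add hM hTM harch hproper htot,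
    phi_add hM hTM harch hproper htot, phi_sq hM hTM harch hproper htot,
    phi_neg hM hTM harch hproper htot, phi_neg hM hTM harch hproper htot,
    phi_sq hM hTM harch hproper htot, phi_sq hM hTM harch hproper htot,
    phi_add hM hTM harch hproper htot f₁ f₂]
  ring

include hM hTM harch hproper htot in
lemma phi_eval (f : MvPolynomial (Fin n) ℝ) :
    phi M f = eval (fun i => phi M (X i)) f := by
  induction f using MvPolynomial.induction_on with
  | C c => rw [phi_C hM hTM harch hproper, eval_C]
  | add f₁ f₂ ih₁ ih₂ =>
      rw [phi_add hM hTM harch hproper htot, map_add, ih₁, ih₂]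
  | mul_X f i ih =>
      rw [phi_mul hM hTM harch hproper htot, map_mul, ih, eval_X]

end Phi


section MaxProper

variable {m : ℕ} {g : Fin m → MvPolynomial (Fin n) ℝ}

/-- From any proper quadratic module `Q ⊇ T` one gets a point where everything
in `Q` is nonnegative. -/
lemma exists_point (harch : ∀ f : MvPolynomial (Fin n) ℝ, Bnd g f)
    {Q : Set (MvPolynomial (Fin n) ℝ)} (hQ : IsQM Q) (hTQ : Tset g ⊆ Q)
    (hproper : (-1 : MvPolynomial (Fin n) ℝ) ∉ Q) :
    ∃ x : Fin n → ℝ, ∀ f ∈ Q, 0 ≤ eval x f := by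
  classical
  set S : Set (Set (MvPolynomial (Fin n) ℝ)) :=
    {M | IsQM M ∧ Q ⊆ M ∧ (-1 : MvPolynomial (Fin n) ℝ) ∉ M} with hS
  have hchain : ∀ c ⊆ S, IsChain (· ⊆ ·) c → c.Nonempty →
      ∃ ub ∈ S, ∀ s ∈ c, s ⊆ ub := by
    intro c hcS hch hcne
    obtain ⟨M₀, hM₀⟩ := hcne
    refine ⟨⋃₀ c, ⟨⟨?_, ?_, ?_⟩, ?_, ?_⟩, fun s hs => Set.subset_sUnion_of_mem hs⟩
    · exact ⟨M₀, hM₀, (hcS hM₀).1.one_mem⟩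
    · rintro a b ⟨Ma, hMa, ha⟩ ⟨Mb, hMb, hb⟩
      rcases hch.total hMa hMb with hsub | hsub
      · exact ⟨Mb, hMb, (hcS hMb).1.add_mem (hsub ha) hb⟩
      · exact ⟨Ma, hMa, (hcS hMa).1.add_mem ha (hsub hb)⟩
    · rintro f a ⟨Ma, hMa, ha⟩
      exact ⟨Ma, hMa, (hcS hMa).1.sq_mul_mem f ha⟩
    · intro q hq
      exact ⟨M₀, hM₀, (hcS hM₀).2.1 hq⟩
    · rintro ⟨Mx, hMx, hmem⟩
      exact (hcS hMx).2.2 hmem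
  obtain ⟨M, hQM, hMmax⟩ := zorn_subset_nonempty S hchain Q ⟨hQ, subset_rfl, hproper⟩
  obtain ⟨hM, hQM', hMproper⟩ := hMmax.prop
  have hTM : Tset g ⊆ M := hTQ.trans hQM'
  -- certificates from maximality
  have cert : ∀ a : MvPolynomial (Fin n) ℝ, a ∉ M →
      ∃ mm ∈ M, ∃ s, IsSumSq s ∧ (-1 : MvPolynomial (Fin n) ℝ) = mm + s * a := by
    intro a ha
    set M' : Set (MvPolynomial (Fin n) ℝ) :=
      {x | ∃ mm ∈ M, ∃ s, IsSumSq s ∧ x = mm + s * a} with hM'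
    have hM'QM : IsQM M' := by
      refine ⟨⟨1, hM.one_mem, 0, IsSumSq.zero, by ring⟩, ?_, ?_⟩
      · rintro x y ⟨mx, hmx, sx, hsx, rfl⟩ ⟨my, hmy, sy, hsy, rfl⟩
        exact ⟨mx + my, hM.add_mem hmx hmy, sx + sy, hsx.add hsy, by ring⟩
      · rintro f x ⟨mx, hmx, sx, hsx, rfl⟩
        exact ⟨f ^ 2 * mx, hM.sq_mul_mem f hmx, f ^ 2 * sx,
          by simpa [pow_two] using isSumSq_mul (isSumSq_sq f) hsx, by ring⟩
    have hMM' : M ⊆ M' := fun x hx => ⟨x, hx, 0, IsSumSq.zero, by ring⟩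
    have haM' : a ∈ M' := ⟨0, hM.zero_mem, 1, isSumSq_one, by ring⟩
    by_cases hneg : (-1 : MvPolynomial (Fin n) ℝ) ∈ M'
    · obtain ⟨mm, hmm, sder, hsder, heq⟩ := hneg
      exact ⟨mm, hmm, sder, hsder, heq⟩
    · exfalso
      have hM'S : M' ∈ S := ⟨hM'QM, hQM'.trans hMM', hneg⟩
      have := hMmax.2 hM'S hMM'
      exact ha (this haM')
  -- totality
  have htot : ∀ a : MvPolynomial (Fin n) ℝ, a ∈ M ∨ -a ∈ M := by
    intro a
    by_contra hcon
    push_neg at hcon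
    obtain ⟨ha, hna⟩ := hcon
    obtain ⟨m₁, hm₁, s₁, hs₁, e₁⟩ := cert a ha
    obtain ⟨m₂, hm₂, s₂, hs₂, e₂⟩ := cert (-a) hna
    have hx : s₂ * m₁ + s₁ * m₂ ∈ M :=
      hM.add_mem (hM.sos_mul_mem hs₂ hm₁) (hM.sos_mul_mem hs₁ hm₂)
    have hxval : s₂ * m₁ + s₁ * m₂ = -(s₁ + s₂) := by
      linear_combination (-s₂) * e₁ + (-s₁) * e₂
    have hnegs₂ : -s₂ ∈ M := by
      rw [show (-s₂ : MvPolynomial (Fin n) ℝ) = s₁ + (s₂ * m₁ + s₁ * m₂) from by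
        linear_combination -hxval]
      exact hM.add_mem (hM.sos_mem hs₁) hx
    have h4 : (4 : MvPolynomial (Fin n) ℝ) * (-(s₂ * a)) ∈ M := by
      rw [show ((4 : MvPolynomial (Fin n) ℝ) * (-(s₂ * a)))
          = (a+1)^2 * (-s₂) + (a-1)^2 * s₂ from by ring]
      exact hM.add_mem (hM.sq_mul_mem _ hnegs₂) (hM.sq_mul_mem _ (hM.sos_mem hs₂))
    have h5 : -(s₂ * a) ∈ M := by
      rw [← quarter_mul (-(s₂ * a))]
      exact hM.const_mul_mem (by norm_num) h4
    apply hMproper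
    rw [e₂, show s₂ * (-a) = -(s₂ * a) from by ring]
    exact hM.add_mem hm₂ h5
  refine ⟨fun i => phi M (X i), fun f hf => ?_⟩
  have h0 : 0 ≤ phi M f := phi_nonneg hM hTM harch hMproper (hQM' hf)
  rwa [phi_eval hM hTM harch hMproper htot f] at h0

end MaxProper


section Topo

lemma eval_continuous (f : MvPolynomial (Fin n) ℝ) :
    Continuous fun x : Fin n → ℝ => eval x f := by
  induction f using MvPolynomial.induction_on with
  | C c => simpa using continuous_const
  | add f₁ f₂ ih₁ ih₂ => simp only [map_add]; exact ih₁.add ih₂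
  | mul_X f i ih => simp only [map_mul, eval_X]; exact ih.mul (continuous_apply i)

variable {m : ℕ} {g : Fin m → MvPolynomial (Fin n) ℝ} {N : ℕ} {hm : 0 < m}

include hm in
lemma K_compact (hg1 : g ⟨0, hm⟩ = C (N : ℝ) - ∑ i : Fin n, X i ^ 2) :
    IsCompact {x : Fin n → ℝ | ∀ j, 0 ≤ eval x (g j)} := by
  rw [Metric.isCompact_iff_isClosed_bounded]
  constructor
  · have : {x : Fin n → ℝ | ∀ j, 0 ≤ eval x (g j)}
        = ⋂ j : Fin m, {x : Fin n → ℝ | 0 ≤ eval x (g j)} := by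
      ext x; simp
    rw [this]
    exact isClosed_iInter fun j => isClosed_le continuous_const (eval_continuous _)
  · rw [Metric.isBounded_iff_subset_closedBall 0]
    refine ⟨Real.sqrt N, fun x hx => ?_⟩
    have h0 := hx ⟨0, hm⟩
    rw [hg1] at h0
    have hsum : eval x (C (N : ℝ) - ∑ i : Fin n, X i ^ 2)
        = (N : ℝ) - ∑ i : Fin n, (x i) ^ 2 := by
      simp
    rw [hsum] at h0
    have hsumle : ∑ i : Fin n, (x i) ^ 2 ≤ (N : ℝ) := by linarith
    simp only [Metric.mem_closedBall]
    rw [dist_pi_le_iff (Real.sqrt_nonneg _)]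
    intro i
    have h1 : (x i) ^ 2 ≤ (N : ℝ) := by
      have hs := Finset.single_le_sum (f := fun j => (x j)^2)
        (fun j _ => sq_nonneg (x j)) (Finset.mem_univ i)
      have hs' : x i ^ 2 ≤ ∑ j : Fin n, x j ^ 2 := by simpa using hs
      linarith
    rw [Real.dist_eq]
    simp only [Pi.zero_apply, sub_zero]
    calc |x i| = Real.sqrt ((x i) ^ 2) := by rw [Real.sqrt_sq_eq_abs]
      _ ≤ Real.sqrt N := Real.sqrt_le_sqrt h1

end Topo

section Main

variable {m : ℕ} {g : Fin m → MvPolynomial (Fin n) ℝ} {N : ℕ} {hm : 0 < m}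

include hm in
theorem putinar_main (hg1 : g ⟨0, hm⟩ = C (N : ℝ) - ∑ i : Fin n, X i ^ 2)
    (p : MvPolynomial (Fin n) ℝ)
    (hp : ∀ w : Fin n → ℝ, (∀ j : Fin m, 0 ≤ eval w (g j)) → 0 < eval w p) :
    p ∈ Tset g := by
  classical
  have hQM := T_isQM g
  have harch : ∀ f : MvPolynomial (Fin n) ℝ, Bnd g f := bnd_all g hg1
  by_cases hT : (-1 : MvPolynomial (Fin n) ℝ) ∈ Tset g
  · -- improper case : everything belongs to T
    have hmem : C (1/4 : ℝ) * ((p+1)^2 * 1 + (p-1)^2 * (-1)) ∈ Tset g :=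
      hQM.const_mul_mem (by norm_num)
        (hQM.add_mem (hQM.sq_mul_mem _ hQM.one_mem) (hQM.sq_mul_mem _ hT))
    rwa [show ((p+1)^2 * 1 + (p-1)^2 * (-1) : MvPolynomial (Fin n) ℝ) = 4 * p from by ring,
      quarter_mul] at hmem
  · -- proper case
    have hKne : ∃ x : Fin n → ℝ, ∀ j, 0 ≤ eval x (g j) := by
      obtain ⟨x, hx⟩ := exists_point harch hQM subset_rfl hT
      exact ⟨x, fun j => hx _ (g_mem_T g j)⟩
    obtain ⟨x₀, hx₀K, hx₀min⟩ :=
      (K_compact hg1).exists_isMinOn hKne (eval_continuous p).continuousOn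
    obtain ⟨ε₀, hε₀def⟩ : ∃ e : ℝ, e = eval x₀ p / 2 := ⟨_, rfl⟩
    have hx₀Kmem : ∀ j, 0 ≤ eval x₀ (g j) := hx₀K
    have hε₀ : 0 < ε₀ := by
      have := hp x₀ hx₀Kmem
      rw [hε₀def]; linarith
    obtain ⟨pt, hpt⟩ : ∃ q : MvPolynomial (Fin n) ℝ, q = p - C ε₀ := ⟨_, rfl⟩
    obtain ⟨T', hT'⟩ : ∃ T'' : Set (MvPolynomial (Fin n) ℝ),
        T'' = {f | ∃ t ∈ Tset g, ∃ s, IsSumSq s ∧ f = t + s * (-pt)} := ⟨_, rfl⟩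
    have hT'QM : IsQM T' := by
      rw [hT']
      refine ⟨⟨1, hQM.one_mem, 0, IsSumSq.zero, by ring⟩, ?_, ?_⟩
      · rintro a b ⟨ta, hta, sa, hsa, rfl⟩ ⟨tb, htb, sb, hsb, rfl⟩
        exact ⟨ta + tb, hQM.add_mem hta htb, sa + sb, hsa.add hsb, by ring⟩
      · rintro f a ⟨ta, hta, sa, hsa, rfl⟩
        exact ⟨f ^ 2 * ta, hQM.sq_mul_mem f hta, f ^ 2 * sa,
          by simpa [pow_two] using isSumSq_mul (isSumSq_sq f) hsa, by ring⟩
    have hTT' : Tset g ⊆ T' := by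
      rw [hT']; exact fun x hx => ⟨x, hx, 0, IsSumSq.zero, by ring⟩
    have hT'improper : (-1 : MvPolynomial (Fin n) ℝ) ∈ T' := by
      by_contra him
      obtain ⟨x₁, hx₁⟩ := exists_point harch hT'QM hTT' him
      have hx₁K : ∀ j, 0 ≤ eval x₁ (g j) := fun j => hx₁ _ (hTT' (g_mem_T g j))
      have hnegpt : (0:ℝ) ≤ eval x₁ (-pt) := by
        refine hx₁ _ ?_
        rw [hT']
        exact ⟨0, hQM.zero_mem, 1, isSumSq_one, by ring⟩
      have hptval : eval x₁ (-pt) = -(eval x₁ p - ε₀) := by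
        rw [hpt]; simp
      rw [hptval] at hnegpt
      have hmin := isMinOn_iff.mp hx₀min x₁ hx₁K
      rw [hε₀def] at hnegpt
      have hmin' : eval x₀ p ≤ eval x₁ p := hmin
      linarith
    rw [hT'] at hT'improper
    obtain ⟨t₁, ht₁, σ, hσ, hcert⟩ := hT'improper
    have hσp : σ * pt = 1 + t₁ := by linear_combination hcert
    -- bounds
    obtain ⟨k₁, hk₁pos, hk₁m, hk₁p⟩ := harch pt
    obtain ⟨k₂, hk₂pos, hk₂m, _⟩ := harch t₁
    obtain ⟨k, hkdef⟩ : ∃ k : ℝ, k = k₁ + k₂ + 1 := ⟨_, rfl⟩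
    have hk1 : 1 ≤ k := by rw [hkdef]; linarith
    have hkpos : 0 < k := by linarith
    have hkpm : C k - pt ∈ Tset g := by
      rw [show (C k : MvPolynomial (Fin n) ℝ) - pt = (C k₁ - pt) + C (k₂ + 1) from by
        rw [hkdef, show (k₁ + k₂ + 1 : ℝ) = k₁ + (k₂ + 1) from by ring, C_add]; ring]
      exact hQM.add_mem hk₁m (hQM.const_mem (by linarith))
    have hkpp : C k + pt ∈ Tset g := by
      rw [show (C k : MvPolynomial (Fin n) ℝ) + pt = (C k₁ + pt) + C (k₂ + 1) from by
        rw [hkdef, show (k₁ + k₂ + 1 : ℝ) = k₁ + (k₂ + 1) from by ring, C_add]; ring]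
      exact hQM.add_mem hk₁p (hQM.const_mem (by linarith))
    have hkt : C k - t₁ ∈ Tset g := by
      rw [show (C k : MvPolynomial (Fin n) ℝ) - t₁ = (C k₂ - t₁) + C (k₁ + 1) from by
        rw [hkdef, show (k₁ + k₂ + 1 : ℝ) = k₂ + (k₁ + 1) from by ring, C_add]; ring]
      exact hQM.add_mem hk₂m (hQM.const_mem (by linarith))
    obtain ⟨κ, hκdef⟩ : ∃ x : ℝ, x = k + 1 := ⟨_, rfl⟩
    have hκpos : 0 < κ := by rw [hκdef]; linarith
    have hκne : κ ≠ 0 := ne_of_gt hκpos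
    obtain ⟨u, hu⟩ : ∃ x : MvPolynomial (Fin n) ℝ, x = C κ⁻¹ * t₁ := ⟨_, rfl⟩
    obtain ⟨v, hv⟩ : ∃ x : MvPolynomial (Fin n) ℝ, x = C κ⁻¹ * (C k - t₁) := ⟨_, rfl⟩
    have hκinv : (0:ℝ) ≤ κ⁻¹ := (inv_pos.mpr hκpos).le
    have huT : u ∈ Tset g := by rw [hu]; exact hQM.const_mul_mem hκinv ht₁
    have hvT : v ∈ Tset g := by rw [hv]; exact hQM.const_mul_mem hκinv hkt
    obtain ⟨θ, hθdef⟩ : ∃ x : ℝ, x = k / κ := ⟨_, rfl⟩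
    have hθpos : 0 < θ := by rw [hθdef]; exact div_pos hkpos hκpos
    have hθlt : θ < 1 := by
      rw [hθdef, div_lt_one hκpos]; linarith
    have huv : u + v = C θ := by
      rw [hu, hv, ← mul_add, show (t₁ + (C k - t₁) : MvPolynomial (Fin n) ℝ) = C k from by ring,
        ← C_mul, hθdef, inv_mul_eq_div]
    obtain ⟨r, hr⟩ := exists_pow_lt_of_lt_one (div_pos hε₀ hkpos) hθlt
    obtain ⟨δ, hδdef⟩ : ∃ x : ℝ, x = θ ^ r := ⟨_, rfl⟩
    rw [← hδdef] at hr
    have hδpos : 0 < δ := by rw [hδdef]; exact pow_pos hθpos r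
    have hδk : k * δ < ε₀ := by
      have h2 := (mul_lt_mul_iff_right₀ hkpos).mpr hr
      rwa [mul_div_cancel₀ _ (ne_of_gt hkpos)] at h2
    -- the geometric decomposition
    have hwpSOS : IsSumSq (σ * pt ^ 2) := isSumSq_mul hσ (isSumSq_sq pt)
    obtain ⟨Sg, hSg⟩ : ∃ x : MvPolynomial (Fin n) ℝ,
        x = C κ⁻¹ * (∑ j ∈ Finset.range r, v ^ j) := ⟨_, rfl⟩
    have hSgT : Sg ∈ Tset g := by
      rw [hSg]
      exact hQM.const_mul_mem hκinv (hQM.sum_mem fun j _ => hQM.pow_mem hvT j)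
    have hfirst : (σ * pt ^ 2) * Sg ∈ Tset g := hQM.sos_mul_mem hwpSOS hSgT
    have hκC : (C κ : MvPolynomial (Fin n) ℝ) * C κ⁻¹ = 1 := by
      rw [← C_mul, mul_inv_cancel₀ hκne, C_1]
    have hone : (1 + t₁ : MvPolynomial (Fin n) ℝ) = C κ * (1 - v) := by
      rw [hv, mul_sub, ← mul_assoc, hκC, one_mul, mul_one,
        show (C κ : MvPolynomial (Fin n) ℝ) - (C k - t₁) = C (κ - k) + t₁ from by
          rw [C_sub]; ring,
        show (κ - k : ℝ) = 1 from by rw [hκdef]; ring, C_1]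
    have hgeomsum : (∑ j ∈ Finset.range r, v ^ j) * (v - 1) = v ^ r - 1 := geom_sum_mul v r
    have hkey : (1 + t₁) * Sg = 1 - v ^ r := by
      rw [hone, hSg]
      linear_combination ((1 - v) * (∑ j ∈ Finset.range r, v ^ j)) * hκC - hgeomsum
    have hwp : (1 + t₁) * pt = σ * pt ^ 2 := by linear_combination (-pt) * hσp
    have hdecomp : pt = (σ * pt ^ 2) * Sg + pt * v ^ r := by
      linear_combination Sg * hwp + (-pt) * hkey
    -- tail estimate
    have hδv : C δ - v ^ r ∈ Tset g := by
      rw [hδdef]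
      exact hQM.const_pow_sub_pow_mem huT hvT huv hθpos r
    have hδvadd : C δ + v ^ r ∈ Tset g :=
      hQM.add_mem (hQM.const_mem (le_of_lt hδpos)) (hQM.pow_mem hvT r)
    have hδv2 : (C δ : MvPolynomial (Fin n) ℝ) ^ 2 - (v ^ r) ^ 2 ∈ Tset g := by
      have h2 := hQM.mul_mem_of_add_const hδv hδvadd (by rw [C_add]; ring)
        (by linarith : (0:ℝ) < δ + δ)
      rwa [show (C δ - v ^ r) * (C δ + v ^ r)
        = (C δ : MvPolynomial (Fin n) ℝ) ^ 2 - (v ^ r) ^ 2 from by ring] at h2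
    have hkp2 : (C k : MvPolynomial (Fin n) ℝ) ^ 2 - pt ^ 2 ∈ Tset g := by
      have h2 := hQM.mul_mem_of_add_const hkpm hkpp (by rw [C_add]; ring)
        (by linarith : (0:ℝ) < k + k)
      rwa [show (C k - pt) * (C k + pt)
        = (C k : MvPolynomial (Fin n) ℝ) ^ 2 - pt ^ 2 from by ring] at h2
    obtain ⟨η, hηdef⟩ : ∃ x : ℝ, x = Real.sqrt (δ / k) := ⟨_, rfl⟩
    have hδkpos : 0 < δ / k := div_pos hδpos hkpos
    have hηpos : 0 < η := by rw [hηdef]; exact Real.sqrt_pos.mpr hδkpos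
    have hη2 : η ^ 2 = δ / k := by rw [hηdef]; exact Real.sq_sqrt hδkpos.le
    have hη2' : (C η : MvPolynomial (Fin n) ℝ) ^ 2 = C (δ/k) := by rw [← C_pow, hη2]
    have hηinv2 : (C η⁻¹ : MvPolynomial (Fin n) ℝ) ^ 2 = C (k/δ) := by
      rw [← C_pow, inv_pow, hη2, inv_div]
    have hηη : (C η : MvPolynomial (Fin n) ℝ) * C η⁻¹ = 1 := by
      rw [← C_mul, mul_inv_cancel₀ (ne_of_gt hηpos), C_1]
    have hc1 : (C (δ/k) : MvPolynomial (Fin n) ℝ) * C k ^ 2 = C (δ * k) := by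
      rw [← C_pow, ← C_mul]; congr 1; field_simp
    have hc2 : (C (k/δ) : MvPolynomial (Fin n) ℝ) * C δ ^ 2 = C (k * δ) := by
      rw [← C_pow, ← C_mul]; congr 1; field_simp
    have hc3 : (C (2*(k*δ)) : MvPolynomial (Fin n) ℝ) = C (δ * k) + C (k * δ) := by
      rw [← C_add]; congr 1; ring
    have htail : 2 * (pt * v ^ r) + C (2*(k*δ)) ∈ Tset g := by
      rw [show (2 * (pt * v ^ r) + C (2*(k*δ)) : MvPolynomial (Fin n) ℝ)
          = (C η * pt + C η⁻¹ * v ^ r) ^ 2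
            + (C (δ/k) * (C k ^ 2 - pt ^ 2) + C (k/δ) * (C δ ^ 2 - (v ^ r) ^ 2)) from by
        linear_combination (-(pt^2)) * hη2' - ((v ^ r)^2) * hηinv2
          - (2*(pt*(v ^ r))) * hηη - hc1 - hc2 + hc3]
      exact hQM.add_mem (hQM.sos_mem (isSumSq_sq _))
        (hQM.add_mem (hQM.const_mul_mem hδkpos.le hkp2)
          (hQM.const_mul_mem (div_pos hkpos hδpos).le hδv2))
    have hC2 : (C (2*(k*δ)) : MvPolynomial (Fin n) ℝ) = 2 * C (k*δ) := by
      rw [C_mul, show (C (2:ℝ) : MvPolynomial (Fin n) ℝ) = 2 from map_ofNat C 2]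
    have hfinal1 : pt + C (k * δ) ∈ Tset g := by
      have hmem := hQM.add_mem hfirst (hQM.const_mul_mem
        (by norm_num : (0:ℝ) ≤ 1/2) htail)
      rwa [show ((σ * pt ^ 2) * Sg + C (1/2 : ℝ) * (2 * (pt * v ^ r) + C (2*(k*δ)))
          : MvPolynomial (Fin n) ℝ) = pt + C (k * δ) from by
        rw [hC2, show ((2:MvPolynomial (Fin n) ℝ) * (pt * v ^ r) + 2 * C (k*δ))
            = 2 * (pt * v ^ r + C (k*δ)) from by ring, half_mul]
        linear_combination -hdecomp] at hmem
    have hmem := hQM.add_mem hfinal1 (hQM.const_mem (by linarith : (0:ℝ) ≤ ε₀ - k * δ))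
    rwa [show (pt + C (k * δ) + C (ε₀ - k * δ) : MvPolynomial (Fin n) ℝ) = p from by
      rw [hpt, C_sub]; ring] at hmem

end Main

end PutinarAux

/-- Putinar's Positivstellensatz: if `g₁ = N − Σ wᵢ²` is among the generators
of the basic semi-algebraic set `𝐊`, then every polynomial strictly positive
on `𝐊` lies in the quadratic module generated by `g₀ = 1, g₁, …, g_m`. -/
theorem putinar_positivstellensatz
    (n m : ℕ) (hm : 0 < m) (N : ℕ)
    (g : Fin m → MvPolynomial (Fin n) ℝ)
    (hg1 : g ⟨0, hm⟩
      = MvPolynomial.C (N : ℝ) - ∑ i : Fin n, MvPolynomial.X i ^ 2)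
    (p : MvPolynomial (Fin n) ℝ)
    (hp : ∀ w : Fin n → ℝ,
      (∀ j : Fin m, 0 ≤ MvPolynomial.eval w (g j)) → 0 < MvPolynomial.eval w p) :
    ∃ s : Fin (m + 1) → MvPolynomial (Fin n) ℝ,
      (∀ j, IsSumSq (s j)) ∧
      p = s 0 + ∑ j : Fin m, s j.succ * g j := by
  obtain ⟨s, hs, heq⟩ := PutinarAux.putinar_main (hm := hm) hg1 p hp
  exact ⟨s, hs, heq⟩
end

section
/- Let N > 0, d ≥ 1, and let L : ℝ[w₁,…,w_n] → ℝ be a linear functional such that L(q²) ≥ 0 for every polynomial q of degree at most d and L((N − Σ_{i=1}^n w_i²)·q²) ≥ 0 for every polynomial q of degree at most d−1. Then for every i ∈ {1,…,n} and every integer k with 1 ≤ k ≤ d: L(w_i^{2k}) ≤ N^k · L(1). -/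
open MvPolynomial

/-- If the degree-`d` moment matrix and the degree-`(d−1)` localizing matrix
with respect to `g₁(w) = N − Σᵢ wᵢ²` of a linear functional `L` are positive
semidefinite, then `L(wᵢ^{2k}) ≤ Nᵏ · L(1)` for all `1 ≤ k ≤ d`. -/
theorem moment_power_bound
    (n d : ℕ) (hd : 1 ≤ d) (N : ℝ) (hN : 0 < N)
    (L : MvPolynomial (Fin n) ℝ →ₗ[ℝ] ℝ)
    (hmom : ∀ q : MvPolynomial (Fin n) ℝ, q.totalDegree ≤ d → 0 ≤ L (q ^ 2))
    (hloc : ∀ q : MvPolynomial (Fin n) ℝ, q.totalDegree ≤ d - 1 →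
      0 ≤ L ((MvPolynomial.C N - ∑ i : Fin n, MvPolynomial.X i ^ 2) * q ^ 2))
    (i : Fin n) (k : ℕ) (hk1 : 1 ≤ k) (hkd : k ≤ d) :
    L (MvPolynomial.X i ^ (2 * k)) ≤ N ^ k * L 1 := by
  clear hk1
  induction k with
  | zero => simp
  | succ k ih =>
    have hkd' : k ≤ d := Nat.le_of_succ_le hkd
    have ihk := ih hkd'
    have hq : (X i ^ k : MvPolynomial (Fin n) ℝ).totalDegree ≤ d - 1 := by
      rw [totalDegree_X_pow]; omega
    have h0 := hloc (X i ^ k) hq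
    have expand : (C N - ∑ j : Fin n, X j ^ 2) * (X i ^ k : MvPolynomial (Fin n) ℝ) ^ 2
        = N • (X i ^ (2 * k)) - ∑ j : Fin n, (X j * X i ^ k) ^ 2 := by
      rw [smul_eq_C_mul, sub_mul, Finset.sum_mul]
      refine congrArg₂ (· - ·) ?_ ?_
      · rw [pow_mul']
      · exact Finset.sum_congr rfl fun j _ => by ring
    rw [expand, map_sub, map_smul, map_sum, smul_eq_mul, sub_nonneg] at h0
    have hnonneg : ∀ j ∈ Finset.univ, 0 ≤ L ((X j * X i ^ k : MvPolynomial (Fin n) ℝ) ^ 2) := by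
      intro j _
      apply hmom
      refine le_trans (totalDegree_mul _ _) ?_
      rw [totalDegree_X, totalDegree_X_pow]
      omega
    have hsingle : L ((X i * X i ^ k : MvPolynomial (Fin n) ℝ) ^ 2)
        ≤ ∑ j : Fin n, L ((X j * X i ^ k : MvPolynomial (Fin n) ℝ) ^ 2) :=
      Finset.single_le_sum hnonneg (Finset.mem_univ i)
    have heq : (X i * X i ^ k : MvPolynomial (Fin n) ℝ) ^ 2 = X i ^ (2 * (k + 1)) := by
      rw [← pow_succ', ← pow_mul']
    rw [heq] at hsingle
    calc L (X i ^ (2 * (k + 1))) ≤ N * L (X i ^ (2 * k)) := hsingle.trans h0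
      _ ≤ N * (N ^ k * L 1) := by
          exact mul_le_mul_of_nonneg_left ihk hN.le
      _ = N ^ (k + 1) * L 1 := by ring
end

section
/- Let d ≥ 1 and let L : ℝ[w₁,…,w_n] → ℝ be a linear functional such that L(q²) ≥ 0 for every polynomial q of degree at most d (i.e. the moment matrix M_d of L is positive semidefinite). Then for every multi-index α ∈ ℕⁿ with |α| ≤ 2d: |L(w^α)| ≤ max( L(1), max_{i=1,…,n} L(w_i^{2d}) ). -/
open MvPolynomial Finset

private def msum {n : ℕ} (β : Fin n →₀ ℕ) : ℕ := β.sum fun _ e => e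

private lemma msum_eq {n : ℕ} (β : Fin n →₀ ℕ) : msum β = ∑ i, β i :=
  Finsupp.sum_fintype _ _ fun _ => rfl

private lemma msum_add {n : ℕ} (β γ : Fin n →₀ ℕ) : msum (β + γ) = msum β + msum γ := by
  simp [msum_eq, Finsupp.add_apply, Finset.sum_add_distrib]

private lemma msum_single {n : ℕ} (i : Fin n) (k : ℕ) : msum (Finsupp.single i k) = k := by
  simp [msum_eq, Finsupp.single_apply]

private lemma msum_zero {n : ℕ} : msum (0 : Fin n →₀ ℕ) = 0 := by simp [msum_eq]

private lemma apply_le_msum {n : ℕ} (β : Fin n →₀ ℕ) (i : Fin n) : β i ≤ msum β := by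
  rw [msum_eq]
  exact Finset.single_le_sum (fun _ _ => Nat.zero_le _) (mem_univ i)

private lemma cs_moment {n d : ℕ} (L : MvPolynomial (Fin n) ℝ →ₗ[ℝ] ℝ)
    (hmom : ∀ q : MvPolynomial (Fin n) ℝ, q.totalDegree ≤ d → 0 ≤ L (q ^ 2))
    (p q : MvPolynomial (Fin n) ℝ) (hp : p.totalDegree ≤ d) (hq : q.totalDegree ≤ d) :
    (L (p * q)) ^ 2 ≤ L (p ^ 2) * L (q ^ 2) := by
  have key : ∀ t : ℝ, 0 ≤ L (p ^ 2) * (t * t) + (2 * L (p * q)) * t + L (q ^ 2) := by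
    intro t
    have hdeg : (t • p + q).totalDegree ≤ d :=
      le_trans (totalDegree_add _ _) (max_le (le_trans (totalDegree_smul_le _ _) hp) hq)
    have hexp : (t • p + q) ^ 2 = (t * t) • p ^ 2 + (2 * t) • (p * q) + q ^ 2 := by
      simp only [smul_eq_C_mul, map_mul, map_ofNat]
      ring
    have h0 := hmom _ hdeg
    rw [hexp] at h0
    simpa [mul_comm, mul_assoc, mul_left_comm] using h0
  have hdis := discrim_le_zero key
  rw [discrim] at hdis
  nlinarith [hdis]

private lemma deg_monomial {n d : ℕ} {β : Fin n →₀ ℕ} (h : msum β ≤ d) :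
    (monomial β (1 : ℝ)).totalDegree ≤ d := by
  rw [totalDegree_monomial _ one_ne_zero]; exact h

private lemma even_moment_le {n d : ℕ} (L : MvPolynomial (Fin n) ℝ →ₗ[ℝ] ℝ)
    (hmom : ∀ q : MvPolynomial (Fin n) ℝ, q.totalDegree ≤ d → 0 ≤ L (q ^ 2))
    (τ : ℝ) (h1 : L 1 ≤ τ) (hX : ∀ i : Fin n, L (X i ^ (2 * d)) ≤ τ) :
    ∀ γ : Fin n →₀ ℕ, msum γ ≤ d → L ((monomial γ (1 : ℝ)) ^ 2) ≤ τ := by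
  classical
  set s : (Fin n →₀ ℕ) → ℝ := fun β => L ((monomial β (1 : ℝ)) ^ 2) with hs
  have hτ0 : 0 ≤ τ := le_trans (by simpa using hmom 1 (by simp)) h1
  have hs0 : ∀ x : Fin n →₀ ℕ, msum x ≤ d → 0 ≤ s x := fun x hx =>
    hmom _ (deg_monomial hx)
  set Φ : (Fin n →₀ ℕ) → ℕ := fun β => ∑ k, (β k) ^ 2 with hΦdef
  set D : Fin n →₀ ℕ := Finsupp.equivFunOnFinite.symm (fun _ => d) with hD
  set B : Finset (Fin n →₀ ℕ) := (Finset.Iic D).filter (fun β => msum β ≤ d) with hB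
  have hmemB : ∀ β : Fin n →₀ ℕ, msum β ≤ d → β ∈ B := by
    intro β h
    refine Finset.mem_filter.mpr ⟨Finset.mem_Iic.mpr ?_, h⟩
    intro k
    exact le_trans (le_trans (apply_le_msum β k) h) (by simp [hD])
  have hBne : B.Nonempty := ⟨0, hmemB 0 (by simp [msum_zero])⟩
  obtain ⟨β₀, hβ₀B, hβ₀max⟩ := B.exists_max_image s hBne
  set A : Finset (Fin n →₀ ℕ) := B.filter (fun x => s β₀ ≤ s x) with hA
  obtain ⟨β, hβA, hβΦ⟩ := A.exists_max_image Φ ⟨β₀, Finset.mem_filter.mpr ⟨hβ₀B, le_refl _⟩⟩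
  have hβB : β ∈ B := (Finset.mem_filter.mp hβA).1
  have hβd : msum β ≤ d := (Finset.mem_filter.mp hβB).2
  have hMβ : ∀ x ∈ B, s x ≤ s β :=
    fun x hx => le_trans (hβ₀max x hx) (Finset.mem_filter.mp hβA).2
  have hΦmax : ∀ x ∈ B, s β ≤ s x → Φ x ≤ Φ β := by
    intro x hx hsx
    exact hβΦ x (Finset.mem_filter.mpr ⟨hx, le_trans (Finset.mem_filter.mp hβA).2 hsx⟩)
  have e2 : ∀ γ : Fin n →₀ ℕ, (monomial γ (1 : ℝ)) ^ 2 = monomial (γ + γ) (1 : ℝ) := by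
    intro γ; rw [pow_two, monomial_mul, one_mul]
  have key : ∀ βp βm : Fin n →₀ ℕ, βp + βm = β + β → msum βp ≤ d → msum βm ≤ d →
      (s β) ^ 2 ≤ s βp * s βm := by
    intro βp βm hsum hp hm
    have h := cs_moment L hmom (monomial βp 1) (monomial βm 1) (deg_monomial hp)
      (deg_monomial hm)
    rwa [monomial_mul, one_mul, hsum, ← e2] at h
  have push : ∀ βp βm : Fin n →₀ ℕ, βp + βm = β + β → msum βp ≤ d → msum βm ≤ d →
      Φ β < Φ βp → s β ≤ 0 := by
    intro βp βm hsum hp hm hφ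
    by_contra hpos
    push_neg at hpos
    have h2 := key βp βm hsum hp hm
    have h3 : s β ≤ s βp := by
      nlinarith [hMβ _ (hmemB _ hm), hs0 _ hp, hpos]
    exact absurd (hΦmax _ (hmemB _ hp) h3) (not_le.mpr hφ)
  -- main claim: s β ≤ τ
  have hsβτ : s β ≤ τ := by
    by_cases hβ0 : β = 0
    · subst hβ0
      simpa [hs, monomial_zero'] using h1
    · obtain ⟨i, hi⟩ : ∃ i, β i ≠ 0 := by
        by_contra h
        push_neg at h
        exact hβ0 (Finsupp.ext h)
      rcases lt_or_eq_of_le hβd with hlt | hsumd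
      · -- interior case: use single i
        set γ : Fin n →₀ ℕ := β - Finsupp.single i 1 with hγdef
        have hle : Finsupp.single i 1 ≤ β :=
          Finsupp.single_le_iff.mpr (Nat.one_le_iff_ne_zero.mpr hi)
        have hγ : γ + Finsupp.single i 1 = β := tsub_add_cancel_of_le hle
        have h11 : (Finsupp.single i 2 : Fin n →₀ ℕ) =
            Finsupp.single i 1 + Finsupp.single i 1 := by
          rw [← Finsupp.single_add]
        have hmsβ : msum β = msum γ + 1 := by
          rw [← hγ, msum_add, msum_single]
        refine le_trans (push (γ + Finsupp.single i 2) γ ?_ ?_ ?_ ?_) hτ0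
        · rw [h11, ← hγ]; abel
        · rw [msum_add, msum_single]; omega
        · omega
        · refine Finset.sum_lt_sum (fun k _ => ?_) ⟨i, mem_univ i, ?_⟩
          · rcases eq_or_ne k i with rfl | hk
            · rw [← hγ]
              simp only [Finsupp.add_apply, Finsupp.single_eq_same]
              exact Nat.pow_le_pow_left (by omega) 2
            · rw [← hγ]
              simp [Finsupp.add_apply, Finsupp.single_eq_of_ne' (Ne.symm hk)]
          · rw [← hγ]
            simp only [Finsupp.add_apply, Finsupp.single_eq_same]
            exact Nat.pow_lt_pow_left (by omega) (by norm_num)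
      · -- boundary case
        by_cases hall : ∀ k, k ≠ i → β k = 0
        · have hβi : β i = d := by
            have : msum β = β i := by
              rw [msum_eq]
              exact Finset.sum_eq_single i (fun k _ hk => hall k hk) (fun h => absurd (mem_univ i) h)
            omega
          have hβs : β = Finsupp.single i d := by
            ext k
            rcases eq_or_ne k i with rfl | hk
            · simp [hβi]
            · simp [Finsupp.single_eq_of_ne' (Ne.symm hk), hall k hk]
          have : s β = L (X i ^ (2 * d)) := by
            rw [hs]
            simp only [hβs, ← X_pow_eq_monomial, ← pow_mul]
            ring_nf
          rw [this]; exact hX i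
        · push_neg at hall
          obtain ⟨j, hji, hj⟩ := hall
          have core : ∀ a b : Fin n, a ≠ b → β a ≠ 0 → β b ≠ 0 → β b ≤ β a → s β ≤ 0 := by
            intro a b hab ha hb hba
            have hleb : Finsupp.single b 1 ≤ β :=
              Finsupp.single_le_iff.mpr (Nat.one_le_iff_ne_zero.mpr hb)
            set δ : Fin n →₀ ℕ := β - Finsupp.single b 1 - Finsupp.single a 1 with hδdef
            have hstep1 : (β - Finsupp.single b 1) + Finsupp.single b 1 = β :=
              tsub_add_cancel_of_le hleb
            have hlea : Finsupp.single a 1 ≤ β - Finsupp.single b 1 := by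
              refine Finsupp.single_le_iff.mpr ?_
              rw [Finsupp.tsub_apply, Finsupp.single_eq_of_ne' (Ne.symm hab)]
              omega
            have hstep2 : δ + Finsupp.single a 1 = β - Finsupp.single b 1 :=
              tsub_add_cancel_of_le hlea
            have hδ : δ + Finsupp.single a 1 + Finsupp.single b 1 = β := by
              rw [hstep2, hstep1]
            have hδa : β a = δ a + 1 := by
              rw [← hδ]
              simp [Finsupp.add_apply, Finsupp.single_eq_same,
                Finsupp.single_eq_of_ne' hab, Finsupp.single_eq_of_ne' (Ne.symm hab)]
            have hδb : β b = δ b + 1 := by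
              rw [← hδ]
              simp [Finsupp.add_apply, Finsupp.single_eq_same,
                Finsupp.single_eq_of_ne' hab, Finsupp.single_eq_of_ne' (Ne.symm hab)]
            have hδk : ∀ k, k ≠ a → k ≠ b → β k = δ k := by
              intro k hka hkb
              rw [← hδ]
              simp [Finsupp.add_apply, Finsupp.single_eq_of_ne' (Ne.symm hka),
                Finsupp.single_eq_of_ne' (Ne.symm hkb)]
            have hmsδ : msum β = msum δ + 2 := by
              rw [← hδ, msum_add, msum_add, msum_single, msum_single]
            have h2a : (Finsupp.single a 2 : Fin n →₀ ℕ) =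
                Finsupp.single a 1 + Finsupp.single a 1 := by rw [← Finsupp.single_add]
            have h2b : (Finsupp.single b 2 : Fin n →₀ ℕ) =
                Finsupp.single b 1 + Finsupp.single b 1 := by rw [← Finsupp.single_add]
            refine push (δ + Finsupp.single a 2) (δ + Finsupp.single b 2) ?_ ?_ ?_ ?_
            · rw [h2a, h2b, ← hδ]; abel
            · rw [msum_add, msum_single]; omega
            · rw [msum_add, msum_single]; omega
            · -- Φ β < Φ (δ + single a 2)
              have hdecomp : ∀ x : Fin n →₀ ℕ,
                  Φ x = (x a) ^ 2 + ((x b) ^ 2 + ∑ k ∈ (univ.erase a).erase b, (x k) ^ 2) := by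
                intro x
                show (∑ k, (x k) ^ 2) = _
                rw [← Finset.add_sum_erase _ _ (mem_univ a)]
                rw [← Finset.add_sum_erase _ _ (Finset.mem_erase.mpr ⟨Ne.symm hab, mem_univ b⟩)]
              rw [hdecomp β, hdecomp (δ + Finsupp.single a 2)]
              have hrest : ∑ k ∈ (univ.erase a).erase b, (β k) ^ 2 =
                  ∑ k ∈ (univ.erase a).erase b, ((δ + Finsupp.single a 2 : Fin n →₀ ℕ) k) ^ 2 := by
                refine Finset.sum_congr rfl fun k hk => ?_
                obtain ⟨hkb, hka, _⟩ : k ≠ b ∧ k ≠ a ∧ True := by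
                  have h1 := Finset.mem_erase.mp hk
                  have h2 := Finset.mem_erase.mp h1.2
                  exact ⟨h1.1, h2.1, trivial⟩
                rw [hδk k hka hkb]
                simp [Finsupp.add_apply, Finsupp.single_eq_of_ne' (Ne.symm hka)]
              rw [← hrest]
              have hpa : (δ + Finsupp.single a 2 : Fin n →₀ ℕ) a = δ a + 2 := by
                simp [Finsupp.add_apply, Finsupp.single_eq_same]
              have hpb : (δ + Finsupp.single a 2 : Fin n →₀ ℕ) b = δ b := by
                simp [Finsupp.add_apply, Finsupp.single_eq_of_ne' hab]
              rw [hpa, hpb, hδa, hδb]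
              have : δ b ≤ δ a := by omega
              nlinarith [this]
          rcases le_total (β j) (β i) with h | h
          · exact le_trans (core i j (Ne.symm hji) hi hj h) hτ0
          · exact le_trans (core j i hji hj hi h) hτ0
  intro γ hγ
  exact le_trans (hMβ _ (hmemB _ hγ)) hsβτ

private lemma exists_part {n : ℕ} (α : Fin n →₀ ℕ) :
    ∀ k, k ≤ msum α → ∃ β : Fin n →₀ ℕ, β ≤ α ∧ msum β = k := by
  intro k
  induction k with
  | zero => exact fun _ => ⟨0, Finsupp.le_def.mpr fun _ => Nat.zero_le _, msum_zero⟩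
  | succ k ih =>
    intro hk
    obtain ⟨β, hβα, hβs⟩ := ih (by omega)
    have hex : ∃ i, β i < α i := by
      by_contra h
      push_neg at h
      have hba : α ≤ β := Finsupp.le_def.mpr h
      have : β = α := le_antisymm hβα hba
      rw [this] at hβs
      omega
    obtain ⟨i, hi⟩ := hex
    refine ⟨β + Finsupp.single i 1, Finsupp.le_def.mpr fun j => ?_,
      by rw [msum_add, msum_single]; omega⟩
    rcases eq_or_ne j i with rfl | hj
    · simp only [Finsupp.add_apply, Finsupp.single_eq_same]
      omega
    · simp only [Finsupp.add_apply, Finsupp.single_eq_of_ne' (Ne.symm hj), add_zero]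
      exact Finsupp.le_def.mp hβα j

/-- If the degree-`d` moment matrix of a linear functional `L` is positive
semidefinite, then every moment of degree at most `2d` is bounded in absolute
value by `max(L(1), maxᵢ L(wᵢ^{2d}))`. -/
theorem moment_uniform_bound
    (n d : ℕ) (hd : 1 ≤ d)
    (L : MvPolynomial (Fin n) ℝ →ₗ[ℝ] ℝ)
    (hmom : ∀ q : MvPolynomial (Fin n) ℝ, q.totalDegree ≤ d → 0 ≤ L (q ^ 2))
    (α : Fin n →₀ ℕ) (hα : (α.sum fun _ e => e) ≤ 2 * d) :
    |L (MvPolynomial.monomial α 1)| ≤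
      (insert (L 1)
        (Finset.image (fun i : Fin n => L (MvPolynomial.X i ^ (2 * d)))
          Finset.univ)).max' (Finset.insert_nonempty _ _) := by
  classical
  set τ := (insert (L 1)
      (Finset.image (fun i : Fin n => L (MvPolynomial.X i ^ (2 * d)))
        Finset.univ)).max' (Finset.insert_nonempty _ _) with hτdef
  have h1 : L 1 ≤ τ := Finset.le_max' _ _ (Finset.mem_insert_self _ _)
  have hX : ∀ i : Fin n, L (X i ^ (2 * d)) ≤ τ := fun i =>
    Finset.le_max' _ (L (X i ^ (2 * d)))
      (Finset.mem_insert_of_mem (Finset.mem_image.mpr ⟨i, mem_univ i, rfl⟩))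
  have hα' : msum α ≤ 2 * d := hα
  obtain ⟨β, hβα, hβs⟩ := exists_part α (min (msum α) d) (min_le_left _ _)
  set γ : Fin n →₀ ℕ := α - β with hγdef
  have hβγ : β + γ = α := by rw [hγdef, add_tsub_cancel_of_le hβα]
  have hmsγ : msum β + msum γ = msum α := by conv_rhs => rw [← hβγ, msum_add]
  have hβd : msum β ≤ d := by omega
  have hγd : msum γ ≤ d := by omega
  have hsplit : (monomial α (1 : ℝ)) = monomial β 1 * monomial γ 1 := by
    rw [monomial_mul, one_mul, hβγ]
  have hcs := cs_moment L hmom (monomial β 1) (monomial γ 1) (deg_monomial hβd)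
    (deg_monomial hγd)
  have hb := even_moment_le L hmom τ h1 hX β hβd
  have hc := even_moment_le L hmom τ h1 hX γ hγd
  have h0b := hmom _ (deg_monomial hβd)
  have h0c := hmom _ (deg_monomial hγd)
  have hτ0 : 0 ≤ τ := le_trans (by simpa using hmom 1 (by simp)) h1
  rw [hsplit]
  rcases abs_cases (L (monomial β 1 * monomial γ 1)) with ⟨he, _⟩ | ⟨he, _⟩ <;>
    rw [he] <;> nlinarith
end
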